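/- arXiv:1803.03696 — 4 statements merged into one kernel-verified Lean document; each statement's English description precedes it below -/
import Mathlib

section
/- Let G be a finite connected simple graph and let T be a set of vertices of G with |T| even. Then G has a T-join J with 2|J| ≤ 2|E(G)| − |E(Ĝ)|, where Ĝ is the maximal bridgeless subgraph of G; in particular, a T-join of G of minimum cardinality has at most |E(G)| − (1/2)|E(Ĝ)| edges. -/
open SimpleGraph Set

variable {V : Type*}

/-- `J` is a `T`-join of `G`: a set of edges of `G` such that a vertex has odd degree
in the spanning subgraph with edge set `J` iff it belongs to `T`. -/
def IsTJoin (G : SimpleGraph V) (T : Set V) (J : Set (Sym2 V)) : Prop :=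
  J ⊆ G.edgeSet ∧ ∀ v : V, (Odd {e ∈ J | v ∈ e}.ncard ↔ v ∈ T)

/-- The edge set of the maximal bridgeless subgraph of `G`: all non-bridge edges. -/
def nonBridgeEdges (G : SimpleGraph V) : Set (Sym2 V) :=
  {e ∈ G.edgeSet | ¬ G.IsBridge e}

/-- A graph is 2-edge-connected if it is connected, has at least two vertices,
and has no bridge. -/
def TwoEdgeConnected (G : SimpleGraph V) : Prop :=
  G.Connected ∧ Nontrivial V ∧ ∀ e, ¬ G.IsBridge e

/-- `H` is the edge set of an even subgraph of `G`: every vertex has even degree. -/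
def IsEvenEdgeSet (G : SimpleGraph V) (H : Set (Sym2 V)) : Prop :=
  H ⊆ G.edgeSet ∧ ∀ v : V, Even {e ∈ H | v ∈ e}.ncard

/-! Signed graphs: a signature is `σ : Sym2 V → Bool`, `σ e = true` meaning `e` is negative. -/

/-- The set of negative edges of `(G, σ)`. -/
def negEdgeSet (G : SimpleGraph V) (σ : Sym2 V → Bool) : Set (Sym2 V) :=
  {e ∈ G.edgeSet | σ e = true}

/-- The set of positive edges of `(G, σ)`. -/
def posEdgeSet (G : SimpleGraph V) (σ : Sym2 V → Bool) : Set (Sym2 V) :=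
  {e ∈ G.edgeSet | σ e = false}

/-- `G⁺`: the spanning subgraph of `G` on the positive edges. -/
def gplus (G : SimpleGraph V) (σ : Sym2 V → Bool) : SimpleGraph V :=
  G.deleteEdges {e | σ e = true}

/-- `C` is the edge set and `S` the vertex set of a cycle of `G`. -/
def IsCycleSet (G : SimpleGraph V) (C : Set (Sym2 V)) (S : Set V) : Prop :=
  ∃ (v : V) (w : G.Walk v v), w.IsCycle ∧ C = {e | e ∈ w.edges} ∧ S = {x | x ∈ w.support}

/-- `C` (with vertex set `S`) is a negative cycle: it has an odd number of negative edges. -/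
def IsNegCycle (G : SimpleGraph V) (σ : Sym2 V → Bool) (C : Set (Sym2 V)) (S : Set V) : Prop :=
  IsCycleSet G C S ∧ Odd {e ∈ C | σ e = true}.ncard

/-- `C` is (the edge set of) a positive cycle: it has an even number of negative edges. -/
def IsPosCycle (G : SimpleGraph V) (σ : Sym2 V → Bool) (C : Set (Sym2 V)) : Prop :=
  (∃ S, IsCycleSet G C S) ∧ Even {e ∈ C | σ e = true}.ncard

/-- `B` is a short barbell whose two negative cycles have edge sets `C₁` and `C₂`:
the two negative cycles meet in exactly one vertex. -/
def IsShortBarbellWith (G : SimpleGraph V) (σ : Sym2 V → Bool)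
    (B C₁ C₂ : Set (Sym2 V)) : Prop :=
  ∃ S₁ S₂, IsNegCycle G σ C₁ S₁ ∧ IsNegCycle G σ C₂ S₂ ∧
    (∃ v, S₁ ∩ S₂ = {v}) ∧ B = C₁ ∪ C₂

/-- `B` is a long barbell whose two negative cycles have edge sets `C₁` and `C₂`:
two vertex-disjoint negative cycles joined by a path meeting them only in its endpoints. -/
def IsLongBarbellWith (G : SimpleGraph V) (σ : Sym2 V → Bool)
    (B C₁ C₂ : Set (Sym2 V)) : Prop :=
  ∃ (S₁ S₂ : Set V) (u v : V) (p : G.Walk u v), IsNegCycle G σ C₁ S₁ ∧ IsNegCycle G σ C₂ S₂ ∧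
    Disjoint S₁ S₂ ∧ p.IsPath ∧ u ∈ S₁ ∧ v ∈ S₂ ∧
    {x | x ∈ p.support} ∩ S₁ = {u} ∧ {x | x ∈ p.support} ∩ S₂ = {v} ∧
    B = C₁ ∪ C₂ ∪ {e | e ∈ p.edges}

/-- `B` is a barbell whose two negative cycles have edge sets `C₁` and `C₂`. -/
def IsBarbellWith (G : SimpleGraph V) (σ : Sym2 V → Bool) (B C₁ C₂ : Set (Sym2 V)) : Prop :=
  IsShortBarbellWith G σ B C₁ C₂ ∨ IsLongBarbellWith G σ B C₁ C₂

/-- `B` is (the edge set of) a barbell of `(G, σ)`. -/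
def IsBarbell (G : SimpleGraph V) (σ : Sym2 V → Bool) (B : Set (Sym2 V)) : Prop :=
  ∃ C₁ C₂, IsBarbellWith G σ B C₁ C₂

/-- A signed-circuit is a positive cycle or a barbell. -/
def IsSignedCircuit (G : SimpleGraph V) (σ : Sym2 V → Bool) (D : Set (Sym2 V)) : Prop :=
  IsPosCycle G σ D ∨ IsBarbell G σ D

open Classical in
/-- `τ(G,σ)`: `|E(G)|` if there is no barbell, otherwise the minimum over all barbells of
the total number of edges of its two negative cycles. -/
noncomputable def tau (G : SimpleGraph V) (σ : Sym2 V → Bool) : ℕ :=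
  if ∃ B, IsBarbell G σ B then
    sInf {n | ∃ B C₁ C₂, IsBarbellWith G σ B C₁ C₂ ∧ n = C₁.ncard + C₂.ncard}
  else G.edgeSet.ncard

/-- The length of a family of signed-circuits (counted with multiplicity). -/
noncomputable def circuitLength (𝓕 : Multiset (Set (Sym2 V))) : ℕ := (𝓕.map Set.ncard).sum

/-- `𝓕` is a signed-circuit cover of `(G, σ)`. -/
def IsSignedCircuitCover (G : SimpleGraph V) (σ : Sym2 V → Bool)
    (𝓕 : Multiset (Set (Sym2 V))) : Prop :=
  (∀ C ∈ 𝓕, IsSignedCircuit G σ C) ∧ ∀ e ∈ G.edgeSet, ∃ C ∈ 𝓕, e ∈ C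

/-- `e` has exactly one endpoint in `U`. -/
def Crosses (U : Set V) (e : Sym2 V) : Prop :=
  ∃ x y, e = s(x, y) ∧ x ∈ U ∧ y ∉ U

open Classical in
/-- The signature obtained from `σ` by switching at the vertex set `U`. -/
noncomputable def switchSign (σ : Sym2 V → Bool) (U : Set V) : Sym2 V → Bool :=
  fun e => if Crosses U e then !(σ e) else σ e

/-- Two signatures are equivalent if one is obtained from the other by switching. -/
def EquivSign (σ σ' : Sym2 V → Bool) : Prop := ∃ U : Set V, σ' = switchSign σ U

/-- The minimum number of negative edges lying entirely inside `W`, over all signatures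
equivalent to `σ` (the negativeness of the signed subgraph induced on `W`). -/
noncomputable def negOn (G : SimpleGraph V) (σ : Sym2 V → Bool) (W : Set V) : ℕ :=
  sInf {n | ∃ U : Set V,
    n = {e | e ∈ G.edgeSet ∧ (∀ x ∈ e, x ∈ W) ∧ switchSign σ U e = true}.ncard}

/-- The negativeness `ε(G,σ)`. -/
noncomputable def negativeness (G : SimpleGraph V) (σ : Sym2 V → Bool) : ℕ :=
  negOn G σ Set.univ

/-- The signed subgraph induced on `W` is balanced. -/
def BalancedOn (G : SimpleGraph V) (σ : Sym2 V → Bool) (W : Set V) : Prop :=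
  negOn G σ W = 0

/-- `(G, σ)` is flow-admissible: each connected component has negativeness ≠ 1, and
for every bridge, neither of the two components obtained by deleting it is balanced. -/
def FlowAdmissible (G : SimpleGraph V) (σ : Sym2 V → Bool) : Prop :=
  ∀ x : V,
    negOn G σ {y | G.Reachable x y} ≠ 1 ∧
    ∀ e ∈ G.edgeSet, G.IsBridge e → (∀ z ∈ e, G.Reachable x z) →
      ∀ z ∈ e, ¬ BalancedOn G σ {y | (G.deleteEdges {e}).Reachable z y}

/-- `{e, f}` is a 2-edge-cut of `G`. -/
def IsTwoEdgeCut (G : SimpleGraph V) (e f : Sym2 V) : Prop :=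
  e ∈ G.edgeSet ∧ f ∈ G.edgeSet ∧ e ≠ f ∧ ¬ G.IsBridge e ∧ ¬ G.IsBridge f ∧
    ¬ (G.deleteEdges {e, f}).Connected

section AuxTJoin
open scoped symmDiff

section AuxBasic
variable {α : Type*} [DecidableEq α]

lemma aux_filter_symmDiff (p : α → Prop) [DecidablePred p] (A B : Finset α) :
    (A ∆ B).filter p = (A.filter p) ∆ (B.filter p) := by
  ext a
  simp only [Finset.mem_filter, Finset.mem_symmDiff]
  tauto

lemma aux_card_symmDiff_add (A B : Finset α) :
    (A ∆ B).card + 2 * (A ∩ B).card = A.card + B.card := by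
  have h1 : A ∆ B = (A \ B) ∪ (B \ A) := symmDiff_def A B
  have hd : Disjoint (A \ B) (B \ A) := by
    simp only [Finset.disjoint_left, Finset.mem_sdiff]
    tauto
  have h2 : (A ∆ B).card = (A \ B).card + (B \ A).card := by
    rw [h1, Finset.card_union_of_disjoint hd]
  have h3 : (A \ B).card + (A ∩ B).card = A.card := Finset.card_sdiff_add_card_inter A B
  have h4 : (B \ A).card + (B ∩ A).card = B.card := Finset.card_sdiff_add_card_inter B A
  have h5 : (B ∩ A).card = (A ∩ B).card := by rw [Finset.inter_comm]
  omega

lemma aux_odd_card_symmDiff (A B : Finset α) :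
    Odd ((A ∆ B).card) ↔ Odd (A.card + B.card) := by
  have := aux_card_symmDiff_add A B
  rw [Nat.odd_iff, Nat.odd_iff]
  omega

end AuxBasic

section Walks
variable {V : Type*} [DecidableEq V] {G : SimpleGraph V}

lemma aux_trail_filter_card {u v : V} {p : G.Walk u v} (ht : p.IsTrail) (x : V) :
    (p.edges.toFinset.filter (fun e => x ∈ e)).card = p.edges.countP (fun e => x ∈ e) := by
  classical
  have h : p.edges.toFinset.filter (fun e => x ∈ e)
      = (p.edges.filter (fun e => decide (x ∈ e))).toFinset := by
    ext e; simp
  rw [h, List.card_toFinset, (ht.edges_nodup.filter _).dedup,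
    List.countP_eq_length_filter]

lemma aux_path_odd {u v : V} {p : G.Walk u v} (hp : p.IsPath) (huv : u ≠ v) (x : V) :
    Odd ((p.edges.toFinset.filter (fun e => x ∈ e)).card) ↔ (x = u ∨ x = v) := by
  rw [aux_trail_filter_card hp.isTrail, Nat.not_even_iff_odd.symm,
    hp.isTrail.even_countP_edges_iff]
  by_cases hxu : x = u <;> by_cases hxv : x = v <;> simp [hxu, hxv, huv]

lemma aux_cycle_even {u : V} {p : G.Walk u u} (hp : p.IsTrail) (x : V) :
    Even ((p.edges.toFinset.filter (fun e => x ∈ e)).card) := by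
  rw [aux_trail_filter_card hp, hp.even_countP_edges_iff]
  simp

end Walks

section Exists
variable {V : Type*} [DecidableEq V] {G : SimpleGraph V}

lemma aux_exists_tjoinF (hG : G.Connected) :
    ∀ (n : ℕ) (Tf : Finset V), Tf.card = n → Even n →
      ∃ Jf : Finset (Sym2 V), ↑Jf ⊆ G.edgeSet ∧
        ∀ x : V, (Odd ((Jf.filter (fun e => x ∈ e)).card) ↔ x ∈ Tf) := by
  intro n
  induction n using Nat.strong_induction_on with
  | _ n ih =>
    intro Tf hcard heven
    rcases Nat.eq_zero_or_pos n with hn0 | hnpos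
    · subst hn0
      refine ⟨∅, by simp, fun x => ?_⟩
      rw [Finset.card_eq_zero] at hcard
      simp [hcard]
    · -- n ≥ 2 since even and positive
      have hn2 : 2 ≤ n := by
        rcases heven with ⟨k, hk⟩; omega
      obtain ⟨u, hu⟩ : Tf.Nonempty := Finset.card_pos.mp (by omega)
      obtain ⟨v, hv⟩ : (Tf.erase u).Nonempty := by
        apply Finset.card_pos.mp
        rw [Finset.card_erase_of_mem hu]
        omega
      have hvu : v ≠ u := Finset.ne_of_mem_erase hv
      have hvT : v ∈ Tf := Finset.mem_of_mem_erase hv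
      set T' := (Tf.erase u).erase v with hT'
      have hT'card : T'.card = n - 2 := by
        rw [hT', Finset.card_erase_of_mem hv, Finset.card_erase_of_mem hu, hcard]; omega
      have hT'even : Even (n - 2) := by
        rcases heven with ⟨k, hk⟩
        exact ⟨k - 1, by omega⟩
      obtain ⟨J', hJ'sub, hJ'deg⟩ := ih (n - 2) (by omega) T' hT'card hT'even
      obtain ⟨w⟩ := hG.preconnected u v
      set p := w.toPath with hpdef
      have hp : (p : G.Walk u v).IsPath := p.2
      set Pf := (p : G.Walk u v).edges.toFinset with hPf
      refine ⟨J' ∆ Pf, ?_, ?_⟩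
      · intro e he
        rw [Finset.coe_symmDiff, Set.mem_symmDiff] at he
        rcases he with ⟨he, -⟩ | ⟨he, -⟩
        · exact hJ'sub he
        · rw [hPf] at he
          simp only [Finset.mem_coe, List.mem_toFinset] at he
          exact (p : G.Walk u v).edges_subset_edgeSet he
      · intro x
        rw [aux_filter_symmDiff, aux_odd_card_symmDiff, Nat.odd_add]
        have hA := hJ'deg x
        have hB := aux_path_odd hp hvu.symm x
        have hBE : Even ((Pf.filter (fun e => x ∈ e)).card) ↔ ¬(x = u ∨ x = v) := by
          rw [← Nat.not_odd_iff_even, hB]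
        have hT'mem : x ∈ T' ↔ x ≠ v ∧ x ≠ u ∧ x ∈ Tf := by
          simp [hT', and_assoc]
        rw [hA, hBE, hT'mem]
        by_cases hxu : x = u <;> by_cases hxv : x = v <;>
          simp [hxu, hxv, hu, hvT, hvu]
end Exists

section Bridge
variable {V : Type*} [DecidableEq V] {G : SimpleGraph V}

lemma aux_swap {α β : Type*} (A : Finset α) (K : Finset β) (r : β → α → Prop)
    [∀ b a, Decidable (r b a)] :
    ∑ v ∈ K, (A.filter (fun f => r v f)).card = ∑ f ∈ A, (K.filter (fun v => r v f)).card := by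
  simp only [Finset.card_filter]
  rw [Finset.sum_comm]

lemma aux_bridge_not_in_even [Fintype V] {H : Finset (Sym2 V)} (hH : ↑H ⊆ G.edgeSet)
    (heven : ∀ v : V, Even ((H.filter (fun e => v ∈ e)).card)) {x y : V}
    (hb : G.IsBridge s(x, y)) : s(x, y) ∉ H := by
  classical
  intro he
  rw [SimpleGraph.isBridge_iff] at hb
  have hnreach := hb
  have hadj : G.Adj x y := (G.mem_edgeSet).mp (hH he)
  have hxy : x ≠ y := hadj.ne
  set H' := H.erase s(x, y) with hH'
  set G₀ := SimpleGraph.fromEdgeSet (↑H' : Set (Sym2 V)) with hG₀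
  have hmono : G₀ ≤ G.deleteEdges {s(x, y)} := by
    intro a b hab
    rw [hG₀, SimpleGraph.fromEdgeSet_adj] at hab
    obtain ⟨hab1, hab2⟩ := hab
    rw [Finset.mem_coe, hH', Finset.mem_erase] at hab1
    rw [SimpleGraph.deleteEdges_adj]
    exact ⟨(G.mem_edgeSet).mp (hH hab1.2), by simpa using hab1.1⟩
  set Kf := Finset.univ.filter (fun v => G₀.Reachable x v) with hKf
  have hxK : x ∈ Kf := by simp only [hKf, Finset.mem_filter, Finset.mem_univ, true_and]; exact SimpleGraph.Reachable.refl x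
  have hyK : y ∉ Kf := by
    simp only [hKf, Finset.mem_filter, Finset.mem_univ, true_and]
    intro hr
    exact hnreach (hr.mono hmono)
  have hclose : ∀ a b : V, s(a, b) ∈ H' → a ∈ Kf → b ∈ Kf := by
    intro a b hf haK
    have hne : a ≠ b := by
      have hmem := hH (H.erase_subset _ hf)
      exact (G.mem_edgeSet.mp hmem).ne
    have hadj0 : G₀.Adj a b := by
      rw [hG₀, SimpleGraph.fromEdgeSet_adj]
      exact ⟨Finset.mem_coe.mpr hf, hne⟩
    simp only [hKf, Finset.mem_filter, Finset.mem_univ, true_and] at haK ⊢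
    exact haK.trans hadj0.reachable
  have heven' : Even (∑ v ∈ Kf, ((H'.filter (fun e => v ∈ e)).card)) := by
    rw [aux_swap]
    apply Finset.even_sum
    intro f hf
    revert hf
    induction f using Sym2.ind with
    | _ a b =>
      intro hf
      by_cases haK : a ∈ Kf
      · have hbK : b ∈ Kf := hclose a b hf haK
        have : Kf.filter (fun v => v ∈ s(a, b)) = {a, b} := by
          ext v
          simp only [Finset.mem_filter, Sym2.mem_iff, Finset.mem_insert, Finset.mem_singleton]
          constructor
          · rintro ⟨-, rfl | rfl⟩ <;> simp
          · rintro (rfl | rfl) <;> simp [haK, hbK]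
        rw [this]
        have hne : a ≠ b := by
          have hmem := hH (H.erase_subset _ hf)
          exact (G.mem_edgeSet.mp hmem).ne
        rw [Finset.card_insert_of_notMem (by simp [hne]), Finset.card_singleton]
        exact ⟨1, rfl⟩
      · have hbK : b ∉ Kf := by
          intro hbK
          exact haK (hclose b a (by rwa [Sym2.eq_swap]) hbK)
        have : Kf.filter (fun v => v ∈ s(a, b)) = ∅ := by
          ext v
          simp only [Finset.mem_filter, Sym2.mem_iff, Finset.notMem_empty, iff_false, not_and]
          rintro hv (rfl | rfl)
          · exact haK hv
          · exact hbK hv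
        rw [this, Finset.card_empty]
        exact Even.zero
  have hodd : Odd (∑ v ∈ Kf, ((H'.filter (fun e => v ∈ e)).card)) := by
    rw [← Finset.sum_erase_add Kf _ hxK]
    have hxodd : Odd ((H'.filter (fun e => x ∈ e)).card) := by
      have h1 : H'.filter (fun e => x ∈ e) = (H.filter (fun e => x ∈ e)).erase s(x, y) := by
        ext e
        simp only [hH', Finset.mem_filter, Finset.mem_erase]
        tauto
      have h2 : s(x, y) ∈ H.filter (fun e => x ∈ e) := by
        simp [he]
      rw [h1, Finset.card_erase_of_mem h2]
      have h3 := heven x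
      have h4 : 0 < (H.filter (fun e => x ∈ e)).card := Finset.card_pos.mpr ⟨_, h2⟩
      rcases h3 with ⟨k, hk⟩
      exact ⟨k - 1, by omega⟩
    have hrest : Even (∑ v ∈ Kf.erase x, ((H'.filter (fun e => v ∈ e)).card)) := by
      apply Finset.even_sum
      intro v hv
      have hvx : v ≠ x := Finset.ne_of_mem_erase hv
      have hvy : v ≠ y := by
        intro h
        exact hyK (h ▸ Finset.mem_of_mem_erase hv)
      have h1 : H'.filter (fun e => v ∈ e) = H.filter (fun e => v ∈ e) := by
        ext e
        simp only [hH', Finset.mem_filter, Finset.mem_erase]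
        constructor
        · tauto
        · rintro ⟨heH, hve⟩
          refine ⟨⟨?_, heH⟩, hve⟩
          rintro rfl
          rw [Sym2.mem_iff] at hve
          rcases hve with rfl | rfl
          · exact hvx rfl
          · exact hvy rfl
      rw [h1]
      exact heven v
    rcases hrest with ⟨k, hk⟩
    rcases hxodd with ⟨m, hm⟩
    exact ⟨k + m, by omega⟩
  exact ((Nat.not_odd_iff_even.mpr heven')) hodd

end Bridge

section Key
variable {V : Type*} [Fintype V] [DecidableEq V]

lemma aux_key (G : SimpleGraph V) (J : Finset (Sym2 V)) (hJ : ↑J ⊆ G.edgeSet)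
    (hmin : ∀ H : Finset (Sym2 V), ↑H ⊆ G.edgeSet →
      (∀ v : V, Even ((H.filter (fun e => v ∈ e)).card)) →
      (H ∩ J).card ≤ (H \ J).card) :
    2 * J.card + (nonBridgeEdges G).ncard ≤ 2 * G.edgeSet.ncard := by
  classical
  set Ef := G.edgeSet.toFinite.toFinset with hEf
  have hEfc : ↑Ef = G.edgeSet := Set.Finite.coe_toFinset _
  set NB := Ef.filter (fun e => ¬ G.IsBridge e) with hNB
  have hNBsub : NB ⊆ Ef := Finset.filter_subset _ _
  have hNBn : (nonBridgeEdges G).ncard = NB.card := by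
    have : nonBridgeEdges G = ↑NB := by
      ext e
      simp only [nonBridgeEdges, Set.mem_setOf_eq, hNB, Finset.coe_filter, ← hEfc,
        Finset.mem_coe]
    rw [this, Set.ncard_coe_finset]
  have hEn : G.edgeSet.ncard = Ef.card := by rw [← hEfc, Set.ncard_coe_finset]
  have hJE : J ⊆ Ef := by
    rw [← Finset.coe_subset, hEfc]; exact hJ
  set 𝔈 := Ef.powerset.filter
    (fun H => ∀ v : V, Even ((H.filter (fun e => v ∈ e)).card)) with h𝔈
  have hmem𝔈 : ∀ H : Finset (Sym2 V), H ∈ 𝔈 ↔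
      ((↑H : Set (Sym2 V)) ⊆ G.edgeSet ∧
        ∀ v : V, Even ((H.filter (fun e => v ∈ e)).card)) := by
    intro H
    rw [h𝔈, Finset.mem_filter, Finset.mem_powerset, ← Finset.coe_subset, hEfc]
  set c : Sym2 V → ℕ := fun e => (𝔈.filter (fun H => e ∈ H)).card with hc
  -- c vanishes on bridges
  have hcbridge : ∀ e : Sym2 V, G.IsBridge e → c e = 0 := by
    intro e hbr
    rw [hc]
    rw [Finset.card_eq_zero, Finset.filter_eq_empty_iff]
    intro H hH'
    rw [hmem𝔈] at hH'
    revert hbr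
    induction e using Sym2.ind with
    | _ x y => exact fun hbr => aux_bridge_not_in_even hH'.1 hH'.2 hbr
  -- 2 c e = N on non-bridges
  have hcnb : ∀ e ∈ NB, 2 * c e = 𝔈.card := by
    intro e he
    rw [hNB, Finset.mem_filter] at he
    obtain ⟨heE, hebr⟩ := he
    have heE' : e ∈ G.edgeSet := by rw [← hEfc]; exact Finset.mem_coe.mpr heE
    rw [SimpleGraph.isBridge_iff_forall_cycle_notMem heE'] at hebr
    push_neg at hebr
    obtain ⟨u, p, hcyc, hep⟩ := hebr
    set C := p.edges.toFinset with hC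
    have hCsub : (↑C : Set (Sym2 V)) ⊆ G.edgeSet := by
      intro f hf
      exact p.edges_subset_edgeSet (by simpa [hC] using hf)
    have hCeven : ∀ v : V, Even ((C.filter (fun e => v ∈ e)).card) :=
      fun v => aux_cycle_even hcyc.isCircuit.isTrail v
    have heC : e ∈ C := by simp [hC, hep]
    have hstep : ∀ H ∈ 𝔈, H ∆ C ∈ 𝔈 := by
      intro H hH'
      rw [hmem𝔈] at hH' ⊢
      refine ⟨?_, ?_⟩
      · intro f hf
        rw [Finset.coe_symmDiff, Set.mem_symmDiff] at hf
        rcases hf with ⟨hf, -⟩ | ⟨hf, -⟩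
        · exact hH'.1 hf
        · exact hCsub hf
      · intro v
        rw [aux_filter_symmDiff, ← Nat.not_odd_iff_even, aux_odd_card_symmDiff, Nat.odd_add]
        have h1 : ¬ Odd ((H.filter (fun e => v ∈ e)).card) :=
          Nat.not_odd_iff_even.mpr (hH'.2 v)
        have h2 : Even ((C.filter (fun e => v ∈ e)).card) := hCeven v
        tauto
    have hbij : (𝔈.filter (fun H => e ∈ H)).card = (𝔈.filter (fun H => e ∉ H)).card := by
      apply Finset.card_bij' (fun H _ => H ∆ C) (fun H _ => H ∆ C)
      · intro H hH'
        rw [Finset.mem_filter] at hH' ⊢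
        refine ⟨hstep H hH'.1, ?_⟩
        rw [Finset.mem_symmDiff]
        have := hH'.2
        tauto
      · intro H hH'
        rw [Finset.mem_filter] at hH' ⊢
        refine ⟨hstep H hH'.1, ?_⟩
        rw [Finset.mem_symmDiff]
        have := hH'.2
        tauto
      · intro H _; exact symmDiff_symmDiff_cancel_right C H
      · intro H _; exact symmDiff_symmDiff_cancel_right C H
    have hdisj : Disjoint (𝔈.filter (fun H => e ∈ H)) (𝔈.filter (fun H => e ∉ H)) := by
      rw [Finset.disjoint_left]
      intro H h1 h2
      exact (Finset.mem_filter.mp h2).2 (Finset.mem_filter.mp h1).2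
    have hunion : 𝔈.filter (fun H => e ∈ H) ∪ 𝔈.filter (fun H => e ∉ H) = 𝔈 := by
      ext H
      simp only [Finset.mem_union, Finset.mem_filter]
      tauto
    have htot : (𝔈.filter (fun H => e ∈ H)).card + (𝔈.filter (fun H => e ∉ H)).card
        = 𝔈.card := by
      rw [← Finset.card_union_of_disjoint hdisj, hunion]
    show 2 * (𝔈.filter (fun H => e ∈ H)).card = 𝔈.card
    omega
  -- the main summation inequality
  have hsum : ∑ e ∈ J, c e ≤ ∑ e ∈ Ef \ J, c e := by
    have h1 : ∀ H ∈ 𝔈, (H ∩ J).card ≤ (H \ J).card := fun H hH' =>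
      hmin H ((hmem𝔈 H).mp hH').1 ((hmem𝔈 H).mp hH').2
    have h2 : ∑ H ∈ 𝔈, (H ∩ J).card = ∑ e ∈ J, c e := by
      have hrw : ∀ H : Finset (Sym2 V), H ∩ J = J.filter (fun f => f ∈ H) := by
        intro H; ext f; simp only [Finset.mem_inter, Finset.mem_filter]; tauto
      calc ∑ H ∈ 𝔈, (H ∩ J).card
          = ∑ H ∈ 𝔈, (J.filter (fun f => f ∈ H)).card := by simp_rw [hrw]
        _ = ∑ f ∈ J, (𝔈.filter (fun H => f ∈ H)).card :=
            aux_swap J 𝔈 (fun H f => f ∈ H)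
    have h3 : ∑ H ∈ 𝔈, (H \ J).card = ∑ e ∈ Ef \ J, c e := by
      have hrw : ∀ H ∈ 𝔈, H \ J = (Ef \ J).filter (fun f => f ∈ H) := by
        intro H hH'
        have hHE : H ⊆ Ef := by
          rw [h𝔈] at hH'
          exact Finset.mem_powerset.mp (Finset.mem_filter.mp hH').1
        ext f
        simp only [Finset.mem_sdiff, Finset.mem_filter]
        constructor
        · intro hf; exact ⟨⟨hHE hf.1, hf.2⟩, hf.1⟩
        · tauto
      calc ∑ H ∈ 𝔈, (H \ J).card
          = ∑ H ∈ 𝔈, ((Ef \ J).filter (fun f => f ∈ H)).card :=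
            Finset.sum_congr rfl (fun H hH' => by rw [hrw H hH'])
        _ = ∑ f ∈ Ef \ J, (𝔈.filter (fun H => f ∈ H)).card :=
            aux_swap (Ef \ J) 𝔈 (fun H f => f ∈ H)
    calc ∑ e ∈ J, c e = ∑ H ∈ 𝔈, (H ∩ J).card := h2.symm
      _ ≤ ∑ H ∈ 𝔈, (H \ J).card := Finset.sum_le_sum h1
      _ = ∑ e ∈ Ef \ J, c e := h3
  -- restrict both sums to non-bridge edges
  have h4 : ∑ e ∈ J ∩ NB, c e = ∑ e ∈ J, c e := by
    apply Finset.sum_subset Finset.inter_subset_left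
    intro e heJ henot
    have hbr : G.IsBridge e := by
      by_contra hbr
      exact henot (Finset.mem_inter.mpr ⟨heJ, Finset.mem_filter.mpr ⟨hJE heJ, hbr⟩⟩)
    exact hcbridge e hbr
  have h5 : ∑ e ∈ NB \ J, c e = ∑ e ∈ Ef \ J, c e := by
    apply Finset.sum_subset
    · exact Finset.sdiff_subset_sdiff hNBsub le_rfl
    · intro e heJ henot
      rw [Finset.mem_sdiff] at heJ
      have hbr : G.IsBridge e := by
        by_contra hbr
        exact henot (Finset.mem_sdiff.mpr ⟨Finset.mem_filter.mpr ⟨heJ.1, hbr⟩, heJ.2⟩)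
      exact hcbridge e hbr
  -- turn into cardinalities
  have h6 : ∑ e ∈ J ∩ NB, 2 * c e = (J ∩ NB).card * 𝔈.card := by
    rw [Finset.sum_congr rfl (fun e he => hcnb e (Finset.mem_inter.mp he).2)]
    rw [Finset.sum_const, smul_eq_mul]
  have h7 : ∑ e ∈ NB \ J, 2 * c e = (NB \ J).card * 𝔈.card := by
    rw [Finset.sum_congr rfl (fun e he => hcnb e (Finset.mem_sdiff.mp he).1)]
    rw [Finset.sum_const, smul_eq_mul]
  have hN0 : 0 < 𝔈.card := by
    apply Finset.card_pos.mpr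
    refine ⟨∅, ?_⟩
    rw [hmem𝔈]
    simp
  have hkey : (J ∩ NB).card ≤ (NB \ J).card := by
    have hmul : (J ∩ NB).card * 𝔈.card ≤ (NB \ J).card * 𝔈.card := by
      rw [← h6, ← h7]
      calc ∑ e ∈ J ∩ NB, 2 * c e = 2 * ∑ e ∈ J ∩ NB, c e := by rw [Finset.mul_sum]
        _ = 2 * ∑ e ∈ J, c e := by rw [h4]
        _ ≤ 2 * ∑ e ∈ Ef \ J, c e := by omega
        _ = 2 * ∑ e ∈ NB \ J, c e := by rw [h5]
        _ = ∑ e ∈ NB \ J, 2 * c e := by rw [Finset.mul_sum]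
    exact Nat.le_of_mul_le_mul_right hmul hN0
  -- final arithmetic
  have e1 : (NB ∩ J).card + (NB \ J).card = NB.card := Finset.card_inter_add_card_sdiff NB J
  have e2 : (J ∩ NB).card = (NB ∩ J).card := by rw [Finset.inter_comm]
  have e3 : (J ∩ NB).card + (J \ NB).card = J.card := Finset.card_inter_add_card_sdiff J NB
  have e4 : (J \ NB).card ≤ (Ef \ NB).card :=
    Finset.card_le_card (Finset.sdiff_subset_sdiff hJE le_rfl)
  have e5 : (Ef \ NB).card + NB.card = Ef.card := Finset.card_sdiff_add_card_eq_card hNBsub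
  rw [hNBn, hEn]
  omega

end Key

end AuxTJoin

/-- a connected graph with `|T|` even has a `T`-join `J` with
`2|J| ≤ 2|E(G)| − |E(Ĝ)|`; in particular a minimum `T`-join has at most
`|E(G)| − |E(Ĝ)|/2` edges. -/
theorem stmt0 {V : Type*} [Fintype V] (G : SimpleGraph V) (T : Set V)
    (hG : G.Connected) (hT : Even T.ncard) :
    (∃ J : Set (Sym2 V), IsTJoin G T J ∧
      2 * J.ncard + (nonBridgeEdges G).ncard ≤ 2 * G.edgeSet.ncard) ∧
    ∀ J : Set (Sym2 V), IsTJoin G T J →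
      (∀ J' : Set (Sym2 V), IsTJoin G T J' → J.ncard ≤ J'.ncard) →
      2 * J.ncard + (nonBridgeEdges G).ncard ≤ 2 * G.edgeSet.ncard := by
  classical
  have hiso : ∀ Jf : Finset (Sym2 V), IsTJoin G T ↑Jf ↔
      ((↑Jf : Set (Sym2 V)) ⊆ G.edgeSet ∧
        ∀ v : V, (Odd ((Jf.filter (fun e => v ∈ e)).card) ↔ v ∈ T)) := by
    intro Jf
    unfold IsTJoin
    refine and_congr Iff.rfl (forall_congr' fun v => ?_)
    have h : {e ∈ (↑Jf : Set (Sym2 V)) | v ∈ e} = ↑(Jf.filter (fun e => v ∈ e)) := by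
      ext e; simp
    rw [h, Set.ncard_coe_finset]
  have main : ∀ J : Set (Sym2 V), IsTJoin G T J →
      (∀ J' : Set (Sym2 V), IsTJoin G T J' → J.ncard ≤ J'.ncard) →
      2 * J.ncard + (nonBridgeEdges G).ncard ≤ 2 * G.edgeSet.ncard := by
    intro J hJoin hminJ
    have hfin : J.Finite := Set.toFinite J
    set Jf := hfin.toFinset with hJf
    have hcoe : ↑Jf = J := hfin.coe_toFinset
    have hJoin' : IsTJoin G T ↑Jf := by rw [hcoe]; exact hJoin
    rw [hiso] at hJoin'
    have hncard : J.ncard = Jf.card := by rw [← hcoe, Set.ncard_coe_finset]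
    rw [hncard]
    apply aux_key G Jf hJoin'.1
    intro H hHsub hHeven
    have hjoin2 : IsTJoin G T ↑(symmDiff Jf H) := by
      rw [hiso]
      constructor
      · intro e he
        rw [Finset.coe_symmDiff, Set.mem_symmDiff] at he
        rcases he with ⟨he, -⟩ | ⟨he, -⟩
        · exact hJoin'.1 he
        · exact hHsub he
      · intro v
        rw [aux_filter_symmDiff, aux_odd_card_symmDiff, Nat.odd_add]
        have h1 := hJoin'.2 v
        have h2 : Even ((H.filter (fun e => v ∈ e)).card) := hHeven v
        have h3 : ¬ Odd ((H.filter (fun e => v ∈ e)).card) := Nat.not_odd_iff_even.mpr h2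
        tauto
    have hle := hminJ _ hjoin2
    rw [hncard, Set.ncard_coe_finset] at hle
    have hsd : (symmDiff Jf H).card = (Jf \ H).card + (H \ Jf).card := by
      rw [symmDiff_def]
      exact Finset.card_union_of_disjoint (by
        rw [Finset.disjoint_left]
        intro a h1 h2
        exact (Finset.mem_sdiff.mp h1).2 (Finset.mem_sdiff.mp h2).1)
    have h8 : (Jf ∩ H).card + (Jf \ H).card = Jf.card :=
      Finset.card_inter_add_card_sdiff Jf H
    have h9 : (H ∩ Jf).card = (Jf ∩ H).card := by rw [Finset.inter_comm]
    omega
  constructor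
  · have hTfin : T.Finite := Set.toFinite T
    obtain ⟨Jf, hsub, hdeg⟩ := aux_exists_tjoinF hG hTfin.toFinset.card hTfin.toFinset rfl
      (by rwa [← Set.ncard_eq_toFinset_card _ hTfin])
    have hJoin0 : IsTJoin G T ↑Jf := by
      rw [hiso]
      exact ⟨hsub, fun v => by rw [hdeg v, Set.Finite.mem_toFinset]⟩
    have hSne : {n | ∃ J : Set (Sym2 V), IsTJoin G T J ∧ J.ncard = n}.Nonempty :=
      ⟨_, ↑Jf, hJoin0, rfl⟩
    obtain ⟨J₀, hJ₀, hJ₀card⟩ := Nat.sInf_mem hSne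
    refine ⟨J₀, hJ₀, main J₀ hJ₀ ?_⟩
    intro J' hJ'
    rw [hJ₀card]
    exact Nat.sInf_le ⟨J', hJ', rfl⟩
  · exact main
end

section
/- Let G be a finite simple 2-edge-connected graph and let T be a set of vertices of G with |T| even. Then G has a T-join J with 2|J| ≤ |E(G)|. -/
open SimpleGraph Set

variable {V : Type*}

open scoped symmDiff

namespace TJoinAux

variable {V : Type*} [DecidableEq V]

open Classical in
/-- Number of edges of `J` incident to `v`. -/
noncomputable def edeg (v : V) (J : Finset (Sym2 V)) : ℕ :=
  (J.filter (fun e => v ∈ e)).card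

open Classical in
lemma edeg_def (v : V) (J : Finset (Sym2 V)) :
    edeg v J = (J.filter (fun e => v ∈ e)).card := rfl

lemma edeg_empty (v : V) : edeg v (∅ : Finset (Sym2 V)) = 0 := by
  classical simp [edeg_def]

lemma edeg_singleton (v : V) (e : Sym2 V) :
    edeg v {e} = if v ∈ e then 1 else 0 := by
  classical
  rw [edeg_def]
  by_cases h : v ∈ e <;> simp [Finset.filter_singleton, h]

lemma card_symmDiff_parity (s t : Finset (Sym2 V)) :
    (s ∆ t).card % 2 = (s.card + t.card) % 2 := by
  have h1 : (s ∆ t).card = (s \ t).card + (t \ s).card := by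
    rw [symmDiff_def]
    exact Finset.card_union_of_disjoint (disjoint_sdiff_sdiff)
  have h2 : (s \ t).card + (s ∩ t).card = s.card := Finset.card_sdiff_add_card_inter s t
  have h3 : (t \ s).card + (t ∩ s).card = t.card := Finset.card_sdiff_add_card_inter t s
  have h4 : (s ∩ t).card = (t ∩ s).card := by rw [Finset.inter_comm]
  omega

lemma edeg_symmDiff (v : V) (s t : Finset (Sym2 V)) :
    edeg v (s ∆ t) % 2 = (edeg v s + edeg v t) % 2 := by
  classical
  have : (s ∆ t).filter (fun e => v ∈ e) =
      (s.filter (fun e => v ∈ e)) ∆ (t.filter (fun e => v ∈ e)) := by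
    ext e
    simp only [Finset.mem_filter, Finset.mem_symmDiff]
    tauto
  rw [edeg_def, this, card_symmDiff_parity, ← edeg_def, ← edeg_def]



lemma ncard_sep_coe (v : V) (F : Finset (Sym2 V)) :
    {e ∈ (↑F : Set (Sym2 V)) | v ∈ e}.ncard = edeg v F := by
  classical
  rw [edeg_def]
  rw [← Set.ncard_coe_finset (F.filter (fun e => v ∈ e))]
  congr 1
  ext e
  simp [Finset.mem_filter]

/-- Fold a list of edges into a finset by symmetric difference. -/
def toJoin : List (Sym2 V) → Finset (Sym2 V)
  | [] => ∅
  | e :: l => {e} ∆ toJoin l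

lemma mem_of_mem_toJoin {l : List (Sym2 V)} {e : Sym2 V} (h : e ∈ toJoin l) : e ∈ l := by
  induction l with
  | nil => simp [toJoin] at h
  | cons a l ih =>
    rw [toJoin, Finset.mem_symmDiff] at h
    rcases h with ⟨h, _⟩ | ⟨h, _⟩
    · simp at h; simp [h]
    · simp [ih h]

lemma edeg_toJoin (v : V) (l : List (Sym2 V)) :
    edeg v (toJoin l) % 2 = (l.map (fun e => if v ∈ e then 1 else 0)).sum % 2 := by
  induction l with
  | nil => simp [toJoin, edeg_empty]
  | cons a l ih =>
    rw [toJoin, edeg_symmDiff, List.map_cons, List.sum_cons, edeg_singleton]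
    omega

lemma walk_incidence_parity {G : SimpleGraph V} {u v : V} (p : G.Walk u v) (x : V) :
    (p.edges.map (fun e => if x ∈ e then 1 else 0)).sum % 2 =
      ((if x = u then 1 else 0) + (if x = v then 1 else 0)) % 2 := by
  induction p with
  | nil =>
    simp only [Walk.edges_nil, List.map_nil, List.sum_nil, Nat.zero_mod]
    split_ifs <;> norm_num
  | @cons a b c h p ih =>
    rw [Walk.edges_cons, List.map_cons, List.sum_cons]
    have hab : a ≠ b := h.ne
    have hmem : (x ∈ s(a, b)) ↔ (x = a ∨ x = b) := Sym2.mem_iff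
    by_cases hxa : x = a <;> by_cases hxb : x = b <;>
      simp only [hmem, hxa, hxb] <;> simp_all <;> omega

/-- The edge finset of a walk, folded by symmetric difference: a `{u,v}`-join. -/
def walkJoin {G : SimpleGraph V} {u v : V} (p : G.Walk u v) : Finset (Sym2 V) :=
  toJoin p.edges

lemma walkJoin_subset {G : SimpleGraph V} {u v : V} (p : G.Walk u v) :
    ↑(walkJoin p) ⊆ G.edgeSet := fun e he =>
  p.edges_subset_edgeSet (mem_of_mem_toJoin he)

lemma edeg_walkJoin {G : SimpleGraph V} {u v : V} (p : G.Walk u v) (x : V) :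
    edeg x (walkJoin p) % 2 =
      ((if x = u then 1 else 0) + (if x = v then 1 else 0)) % 2 := by
  rw [walkJoin, edeg_toJoin, walk_incidence_parity]


lemma tjoin_exists_aux {G : SimpleGraph V} (hc : G.Connected) :
    ∀ (n : ℕ), Even n → ∀ (S : Finset V), S.card = n →
      ∃ J : Finset (Sym2 V), ↑J ⊆ G.edgeSet ∧
        ∀ x : V, edeg x J % 2 = (if x ∈ S then 1 else 0) := by
  intro n
  induction n using Nat.strong_induction_on with
  | _ n ih =>
    intro hn S hS
    rcases Nat.eq_zero_or_pos n with h0 | hpos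
    · subst h0
      rw [Finset.card_eq_zero] at hS
      subst hS
      exact ⟨∅, by simp, fun x => by simp [edeg_empty]⟩
    · have hSne : S.Nonempty := Finset.card_pos.mp (by omega)
      obtain ⟨u, hu⟩ := hSne
      have h2 : 2 ≤ n := by
        rcases hn with ⟨k, hk⟩; omega
      have hcard_erase : (S.erase u).card = n - 1 := by
        rw [Finset.card_erase_of_mem hu, hS]
      have : (S.erase u).Nonempty := Finset.card_pos.mp (by omega)
      obtain ⟨v, hv⟩ := this
      have hvu : v ≠ u := (Finset.mem_erase.mp hv).1
      have hvS : v ∈ S := (Finset.mem_erase.mp hv).2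
      set S' := (S.erase u).erase v with hS'
      have hcard' : S'.card = n - 2 := by
        rw [hS', Finset.card_erase_of_mem hv, hcard_erase]
        omega
      have heven' : Even (n - 2) := by
        rcases hn with ⟨k, hk⟩; exact ⟨k - 1, by omega⟩
      obtain ⟨J', hJ'sub, hJ'⟩ := ih (n - 2) (by omega) heven' S' hcard'
      obtain ⟨p⟩ := hc.preconnected u v
      refine ⟨J' ∆ walkJoin p, ?_, ?_⟩
      · intro e he
        rcases Finset.mem_symmDiff.mp (by exact_mod_cast he) with ⟨h, _⟩ | ⟨h, _⟩
        · exact hJ'sub h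
        · exact walkJoin_subset p h
      · intro x
        have h1 := hJ' x
        have h2 := edeg_walkJoin p x
        have h3 := edeg_symmDiff x J' (walkJoin p)
        have hmem : x ∈ S' ↔ x ∈ S ∧ x ≠ v ∧ x ≠ u := by
          simp [hS', Finset.mem_erase, and_assoc, and_comm]
          tauto
        set i1 := (if x ∈ S' then (1:ℕ) else 0) with hi1
        set iu := (if x = u then (1:ℕ) else 0) with hiu
        set iv := (if x = v then (1:ℕ) else 0) with hiv
        set t := (if x ∈ S then (1:ℕ) else 0) with ht
        have hkey : (i1 + (iu + iv)) % 2 = t := by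
          rw [hi1, hiu, hiv, ht]
          split_ifs <;> simp_all <;> omega
        omega


variable [Fintype V]

open Classical in
/-- The (Finset of) even edge sets of `G`, i.e. the cycle space. -/
noncomputable def evenSets (G : SimpleGraph V) : Finset (Finset (Sym2 V)) :=
  Finset.univ.filter (fun H => ↑H ⊆ G.edgeSet ∧ ∀ v, edeg v H % 2 = 0)

lemma mem_evenSets {G : SimpleGraph V} {H : Finset (Sym2 V)} :
    H ∈ evenSets G ↔ ↑H ⊆ G.edgeSet ∧ ∀ v, edeg v H % 2 = 0 := by
  classical simp [evenSets]

lemma empty_mem_evenSets (G : SimpleGraph V) : (∅ : Finset (Sym2 V)) ∈ evenSets G :=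
  mem_evenSets.mpr ⟨by simp, fun v => by simp [edeg_empty]⟩

lemma symmDiff_mem_evenSets {G : SimpleGraph V} {H K : Finset (Sym2 V)}
    (hH : H ∈ evenSets G) (hK : K ∈ evenSets G) : H ∆ K ∈ evenSets G := by
  rw [mem_evenSets] at hH hK ⊢
  refine ⟨?_, fun v => ?_⟩
  · intro e he
    rcases Finset.mem_symmDiff.mp (by exact_mod_cast he) with ⟨h, _⟩ | ⟨h, _⟩
    · exact hH.1 h
    · exact hK.1 h
  · have := edeg_symmDiff v H K
    have h1 := hH.2 v
    have h2 := hK.2 v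
    omega

lemma exists_even_containing {G : SimpleGraph V} (hb : ∀ e, ¬ G.IsBridge e)
    {e : Sym2 V} (he : e ∈ G.edgeSet) : ∃ H ∈ evenSets G, e ∈ H := by
  induction e with
  | _ a b =>
    have hadj : G.Adj a b := G.mem_edgeSet.mp he
    have hnb := hb s(a, b)
    rw [isBridge_iff_adj_and_forall_walk_mem_edges] at hnb
    push_neg at hnb
    obtain ⟨p, hp⟩ := hnb
    have hem : s(a, b) ∉ walkJoin p := fun h => hp (mem_of_mem_toJoin h)
    refine ⟨{s(a, b)} ∆ walkJoin p, mem_evenSets.mpr ⟨?_, fun x => ?_⟩, ?_⟩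
    · intro f hf
      rcases Finset.mem_symmDiff.mp (by exact_mod_cast hf) with ⟨h, _⟩ | ⟨h, _⟩
      · rw [Finset.mem_singleton] at h; subst h; exact he
      · exact walkJoin_subset p h
    · have h1 := edeg_symmDiff x {s(a, b)} (walkJoin p)
      have h2 := edeg_walkJoin p x
      have h3 := edeg_singleton x s(a, b)
      have hab : a ≠ b := hadj.ne
      have hmem : (x ∈ s(a, b)) ↔ (x = a ∨ x = b) := Sym2.mem_iff
      by_cases hxa : x = a <;> by_cases hxb : x = b <;>
        simp only [hmem, hxa, hxb] at h3 h2 <;> simp_all <;> omega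
    · exact Finset.mem_symmDiff.mpr (Or.inl ⟨Finset.mem_singleton_self _, hem⟩)

open Classical in
lemma half_contain {G : SimpleGraph V} (hb : ∀ e, ¬ G.IsBridge e)
    {e : Sym2 V} (he : e ∈ G.edgeSet) :
    2 * ((evenSets G).filter (fun H => e ∈ H)).card = (evenSets G).card := by
  obtain ⟨He, hHe, heHe⟩ := exists_even_containing hb he
  have hbij : ((evenSets G).filter (fun H => e ∈ H)).card
      = ((evenSets G).filter (fun H => e ∉ H)).card := by
    apply Finset.card_bij' (fun H _ => H ∆ He) (fun H _ => H ∆ He)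
    · intro H hH
      rw [Finset.mem_filter] at hH ⊢
      refine ⟨symmDiff_mem_evenSets hH.1 hHe, fun hc => ?_⟩
      rcases Finset.mem_symmDiff.mp hc with ⟨_, h⟩ | ⟨_, h⟩
      · exact h heHe
      · exact h hH.2
    · intro H hH
      rw [Finset.mem_filter] at hH ⊢
      exact ⟨symmDiff_mem_evenSets hH.1 hHe,
        Finset.mem_symmDiff.mpr (Or.inr ⟨heHe, hH.2⟩)⟩
    · intro H _; exact symmDiff_symmDiff_cancel_right He H
    · intro H _; exact symmDiff_symmDiff_cancel_right He H
  have := Finset.card_filter_add_card_filter_not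
    (s := evenSets G) (p := fun H => e ∈ H)
  omega


open Classical in
lemma exists_small_symmDiff {G : SimpleGraph V} (hb : ∀ e, ¬ G.IsBridge e)
    (J : Finset (Sym2 V)) (hJ : ↑J ⊆ G.edgeSet) :
    ∃ H ∈ evenSets G, 2 * (J ∆ H).card ≤ (G.edgeSet.toFinite.toFinset).card := by
  let E := G.edgeSet.toFinite.toFinset
  have hmemE : ∀ f : Sym2 V, f ∈ E ↔ f ∈ G.edgeSet := fun f => Set.Finite.mem_toFinset _
  -- the total sum identity
  have hsum : ∑ H ∈ evenSets G, 2 * (J ∆ H).card = ∑ H ∈ evenSets G, E.card := by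
    have step1 : ∀ H ∈ evenSets G, 2 * (J ∆ H).card = ∑ e ∈ E, (2 * if e ∈ J ∆ H then 1 else 0) := by
      intro H hH
      rw [← Finset.mul_sum, ← Finset.card_filter]
      congr 2
      ext f
      simp only [Finset.mem_filter, hmemE]
      refine ⟨fun hf => ⟨?_, hf⟩, fun h => h.2⟩
      rcases Finset.mem_symmDiff.mp hf with ⟨h, _⟩ | ⟨h, _⟩
      · exact hJ h
      · exact (mem_evenSets.mp hH).1 h
    have inner : ∀ e ∈ E, (∑ H ∈ evenSets G, (2 * if e ∈ J ∆ H then 1 else 0)) = (evenSets G).card := by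
      intro e heE
      have heG : e ∈ G.edgeSet := (hmemE e).mp heE
      have hhalf := half_contain hb heG
      have hsplit := Finset.card_filter_add_card_filter_not
        (s := evenSets G) (p := fun H => e ∈ H)
      by_cases heJ : e ∈ J
      · have heq : ∀ H ∈ evenSets G, (e ∈ J ∆ H) ↔ (e ∉ H) := by
          intro H _
          rw [Finset.mem_symmDiff]
          tauto
        rw [Finset.sum_congr rfl (fun H hH => by
          rw [if_congr (heq H hH) rfl rfl]), ← Finset.mul_sum, ← Finset.card_filter]
        omega
      · have heq : ∀ H ∈ evenSets G, (e ∈ J ∆ H) ↔ (e ∈ H) := by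
          intro H _
          rw [Finset.mem_symmDiff]
          tauto
        rw [Finset.sum_congr rfl (fun H hH => by
          rw [if_congr (heq H hH) rfl rfl]), ← Finset.mul_sum, ← Finset.card_filter]
        omega
    rw [Finset.sum_congr rfl step1, Finset.sum_comm, Finset.sum_congr rfl inner]
    simp [Finset.sum_const, mul_comm]
  have hne : (evenSets G).Nonempty := ⟨∅, empty_mem_evenSets G⟩
  obtain ⟨H, hH, hle⟩ := Finset.exists_le_of_sum_le hne (le_of_eq hsum)
  exact ⟨H, hH, hle⟩


end TJoinAux

/-- a 2-edge-connected graph with `|T|` even has a `T`-join `J`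
with `2|J| ≤ |E(G)|`. -/
theorem stmt1 {V : Type*} [Fintype V] (G : SimpleGraph V) (hG : TwoEdgeConnected G)
    (T : Set V) (hT : Even T.ncard) :
    ∃ J : Set (Sym2 V), IsTJoin G T J ∧ 2 * J.ncard ≤ G.edgeSet.ncard := by
  classical
  obtain ⟨hconn, -, hb⟩ := hG
  set S := T.toFinite.toFinset with hSdef
  have hScard : S.card = T.ncard := (Set.ncard_eq_toFinset_card T T.toFinite).symm
  have hSmem : ∀ x, x ∈ S ↔ x ∈ T := fun x => Set.Finite.mem_toFinset _
  obtain ⟨J₀, hJ₀sub, hJ₀⟩ := TJoinAux.tjoin_exists_aux hconn T.ncard hT S hScard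
  obtain ⟨H, hH, hle⟩ := TJoinAux.exists_small_symmDiff hb J₀ hJ₀sub
  refine ⟨↑(J₀ ∆ H), ⟨?_, ?_⟩, ?_⟩
  · intro e he
    rcases Finset.mem_symmDiff.mp (by exact_mod_cast he) with ⟨h, -⟩ | ⟨h, -⟩
    · exact hJ₀sub h
    · exact (TJoinAux.mem_evenSets.mp hH).1 h
  · intro v
    rw [TJoinAux.ncard_sep_coe, Nat.odd_iff]
    have h1 := TJoinAux.edeg_symmDiff v J₀ H
    have h2 := hJ₀ v
    have h3 := (TJoinAux.mem_evenSets.mp hH).2 v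
    by_cases hvT : v ∈ T
    · rw [if_pos ((hSmem v).mpr hvT)] at h2
      simp only [hvT, iff_true]
      omega
    · rw [if_neg (fun hc => hvT ((hSmem v).mp hc))] at h2
      simp only [hvT, iff_false]
      omega
  · rw [Set.ncard_coe_finset]
    calc 2 * (J₀ ∆ H).card ≤ (G.edgeSet.toFinite.toFinset).card := hle
      _ = G.edgeSet.ncard := (Set.ncard_eq_toFinset_card _ _).symm
end

section
/- Let (G,σ) be a signed graph such that G⁺ is connected. Then for every set S ⊆ E⁻(G,σ) there exists an even subgraph H of G with S ⊆ E(H) ⊆ E(G⁺) ∪ S and 2|E(H)| ≤ 2|E(G)| − |E(Ĝ⁺)|, where Ĝ⁺ is the maximal bridgeless subgraph of G⁺. -/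
open SimpleGraph Set

variable {V : Type*}

section Stmt2AuxSec
open Finset
namespace Stmt2Aux
variable {V : Type*} [DecidableEq V]

noncomputable def fdeg (A : Finset (Sym2 V)) (v : V) : ℕ :=
  (A.filter (fun e => v ∈ e)).card

lemma card_symmDiff_parity {α : Type*} [DecidableEq α] (s t : Finset α) :
    (symmDiff s t).card % 2 = (s.card + t.card) % 2 := by
  have h1 : (symmDiff s t) ∪ (s ∩ t) = s ∪ t := by
    ext a; simp [Finset.mem_symmDiff]; tauto
  have h2 : Disjoint (symmDiff s t) (s ∩ t) := by
    rw [Finset.disjoint_left]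
    intro a ha hb
    simp [Finset.mem_symmDiff] at ha
    simp at hb
    tauto
  have h3 := Finset.card_union_of_disjoint h2
  rw [h1] at h3
  have h4 := Finset.card_union_add_card_inter s t
  omega

lemma mem_symmDiff' {α : Type*} [DecidableEq α] {s t : Finset α} {a : α} :
    a ∈ symmDiff s t ↔ (a ∈ s ∧ a ∉ t ∨ a ∈ t ∧ a ∉ s) := Finset.mem_symmDiff

lemma fdeg_symmDiff (A B : Finset (Sym2 V)) (v : V) :
    fdeg (symmDiff A B) v % 2 = (fdeg A v + fdeg B v) % 2 := by
  have h : (symmDiff A B).filter (fun e => v ∈ e) =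
      symmDiff (A.filter (fun e => v ∈ e)) (B.filter (fun e => v ∈ e)) := by
    ext e; simp [Finset.mem_symmDiff]; tauto
  rw [fdeg, h, card_symmDiff_parity]; rfl

lemma fdeg_insert {A : Finset (Sym2 V)} {e : Sym2 V} (h : e ∉ A) (v : V) :
    fdeg (insert e A) v = fdeg A v + (if v ∈ e then 1 else 0) := by
  rw [fdeg, Finset.filter_insert]
  split
  · rw [Finset.card_insert_of_notMem (fun hc => h (Finset.mem_filter.mp hc).1)]; rfl
  · simp [fdeg]

lemma trail_fdeg_parity {G : SimpleGraph V} {a b : V} (w : G.Walk a b) (hw : w.IsTrail)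
    (v : V) : fdeg w.edges.toFinset v % 2 =
      ((if v = a then 1 else 0) + (if v = b then 1 else 0)) % 2 := by
  induction w with
  | nil => simp only [SimpleGraph.Walk.edges_nil, List.toFinset_nil, fdeg,
      Finset.filter_empty, Finset.card_empty]; split <;> simp
  | @cons a c b h p ih =>
    rw [SimpleGraph.Walk.isTrail_cons] at hw
    have hne : s(a, c) ∉ p.edges.toFinset := by simpa using hw.2
    rw [SimpleGraph.Walk.edges_cons, List.toFinset_cons, fdeg_insert hne]
    have hac : a ≠ c := h.ne
    have ihp := ih hw.1
    have hsplit : (if v ∈ s(a, c) then 1 else 0 : ℕ) =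
        (if v = a then 1 else 0) + (if v = c then 1 else 0) := by
      by_cases h1 : v = a <;> by_cases h2 : v = c
      · exact absurd (h1.symm.trans h2) hac
      all_goals (simp [h1, h2, Sym2.mem_iff]; first | exact hac | exact Ne.symm hac | skip)
    rw [hsplit]
    omega

lemma cycle_fdeg_even {G : SimpleGraph V} {a : V} (w : G.Walk a a) (hw : w.IsCycle)
    (v : V) : Even (fdeg w.edges.toFinset v) := by
  have := trail_fdeg_parity w hw.isTrail v
  rw [Nat.even_iff]
  split at this <;> omega


lemma sym2_card_mem [Fintype V] {e : Sym2 V} (h : ¬ e.IsDiag) :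
    (Finset.univ.filter (fun v => v ∈ e)).card = 2 := by
  induction e with
  | _ x y =>
    rw [Sym2.mk_isDiag_iff] at h
    have : Finset.univ.filter (fun v => v ∈ s(x, y)) = {x, y} := by
      ext v; simp [Sym2.mem_iff]
    rw [this, Finset.card_pair h]

lemma even_card_odd_fdeg [Fintype V] (A : Finset (Sym2 V)) (hA : ∀ e ∈ A, ¬ e.IsDiag) :
    Even (Finset.univ.filter (fun v => Odd (fdeg A v))).card := by
  have hsum : ∑ v : V, fdeg A v = 2 * A.card := by
    have h1 : ∀ v : V, fdeg A v = ∑ e ∈ A, if v ∈ e then 1 else 0 := by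
      intro v; rw [fdeg, Finset.card_filter]
    calc ∑ v : V, fdeg A v = ∑ v : V, ∑ e ∈ A, if v ∈ e then 1 else 0 := by
          exact Finset.sum_congr rfl (fun v _ => h1 v)
      _ = ∑ e ∈ A, ∑ v : V, if v ∈ e then 1 else 0 := Finset.sum_comm
      _ = ∑ e ∈ A, 2 := by
          refine Finset.sum_congr rfl (fun e he => ?_)
          rw [← Finset.card_filter]
          exact sym2_card_mem (hA e he)
      _ = 2 * A.card := by rw [Finset.sum_const, smul_eq_mul, mul_comm]
  have hsplit := Finset.sum_filter_add_sum_filter_not Finset.univ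
    (fun v => Odd (fdeg A v)) (fun v => fdeg A v)
  set O := Finset.univ.filter (fun v => Odd (fdeg A v)) with hO
  have hOsum : ∑ v ∈ O, fdeg A v = (∑ v ∈ O, (fdeg A v - 1)) + O.card := by
    have h' : ∀ v ∈ O, fdeg A v = (fdeg A v - 1) + 1 := by
      intro v hv
      obtain ⟨k, hk⟩ : Odd (fdeg A v) := (Finset.mem_filter.mp hv).2
      omega
    rw [Finset.sum_congr rfl h', Finset.sum_add_distrib, Finset.sum_const, smul_eq_mul,
      mul_one]
  have hEeven : Even (∑ v ∈ Finset.univ.filter (fun v => ¬ Odd (fdeg A v)), fdeg A v) := by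
    apply Finset.even_sum
    intro v hv
    have := (Finset.mem_filter.mp hv).2
    exact Nat.not_odd_iff_even.mp this
  have hsub : Even (∑ v ∈ O, (fdeg A v - 1)) := by
    apply Finset.even_sum
    intro v hv
    have : Odd (fdeg A v) := (Finset.mem_filter.mp hv).2
    obtain ⟨k, hk⟩ := this
    exact ⟨k, by omega⟩
  rw [Nat.even_iff] at hEeven hsub ⊢
  have h2 : Even (2 * A.card) := ⟨A.card, by ring⟩
  rw [Nat.even_iff] at h2
  omega


lemma exists_tjoin [Fintype V] {G' : SimpleGraph V} (hconn : G'.Connected) :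
    ∀ (n : ℕ) (T : Finset V), T.card = n → Even n →
      ∃ J : Finset (Sym2 V), (∀ e ∈ J, e ∈ G'.edgeSet) ∧
        ∀ v, (Odd (fdeg J v) ↔ v ∈ T) := by
  intro n
  induction n using Nat.strong_induction_on with
  | _ n ih =>
    intro T hcard heven
    rcases T.eq_empty_or_nonempty with hT | ⟨u, hu⟩
    · exact ⟨∅, by simp, fun v => by simp [fdeg, hT]⟩
    · have h2 : 2 ≤ n := by
        rcases heven with ⟨k, hk⟩
        have := Finset.card_pos.mpr ⟨u, hu⟩
        omega
      have herase : (T.erase u).Nonempty := by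
        rw [← Finset.card_pos, Finset.card_erase_of_mem hu]
        omega
      obtain ⟨v, hv⟩ := herase
      have hvu : v ≠ u := (Finset.mem_erase.mp hv).1
      have hvT : v ∈ T := (Finset.mem_erase.mp hv).2
      set T' := (T.erase u).erase v with hT'
      have hT'card : T'.card = n - 2 := by
        rw [hT', Finset.card_erase_of_mem hv, Finset.card_erase_of_mem hu, hcard]; omega
      obtain ⟨J', hJ'sub, hJ'deg⟩ := ih (n - 2) (by omega) T' hT'card (by
        rcases heven with ⟨k, hk⟩; exact ⟨k - 1, by omega⟩)
      obtain ⟨w⟩ := hconn.preconnected u v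
      set p := w.toPath with hp
      set P := (p : G'.Walk u v).edges.toFinset with hP
      refine ⟨symmDiff J' P, ?_, ?_⟩
      · intro e he
        rw [mem_symmDiff'] at he
        rcases he with ⟨he, -⟩ | ⟨he, -⟩
        · exact hJ'sub e he
        · rw [hP, List.mem_toFinset] at he
          exact (p : G'.Walk u v).edges_subset_edgeSet he
      · intro x
        have hpar := fdeg_symmDiff J' P x
        have htrail := trail_fdeg_parity (p : G'.Walk u v) p.2.isTrail x
        rw [← hP] at htrail
        have hJ'x := hJ'deg x
        rw [Nat.odd_iff] at hJ'x ⊢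
        by_cases hxu : x = u <;> by_cases hxv : x = v
        · exact absurd (hxu.symm.trans hxv) (fun h => hvu h.symm)
        · -- x = u, x ≠ v
          have hnT' : x ∉ T' := by simp [hT', Finset.mem_erase, hxu]
          have hxT : x ∈ T := hxu ▸ hu
          rw [if_pos hxu, if_neg hxv] at htrail
          have h0 : ¬ (fdeg J' x % 2 = 1) := fun hh => hnT' (hJ'x.mp hh)
          simp only [hxT, iff_true]
          omega
        · -- x ≠ u, x = v
          have hnT' : x ∉ T' := by simp [hT', Finset.mem_erase, hxv]
          have hxT : x ∈ T := hxv ▸ hvT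
          rw [if_neg hxu, if_pos hxv] at htrail
          have h0 : ¬ (fdeg J' x % 2 = 1) := fun hh => hnT' (hJ'x.mp hh)
          simp only [hxT, iff_true]
          omega
        · -- x ≠ u, x ≠ v
          have hiff : x ∈ T' ↔ x ∈ T := by
            simp [hT', Finset.mem_erase, hxu, hxv]
          rw [if_neg hxu, if_neg hxv] at htrail
          by_cases hxT : x ∈ T
          · have h1 : fdeg J' x % 2 = 1 := hJ'x.mpr (hiff.mpr hxT)
            simp only [hxT, iff_true]
            omega
          · have h0 : ¬ (fdeg J' x % 2 = 1) := fun hh => hxT (hiff.mp (hJ'x.mp hh))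
            simp only [hxT, iff_false]
            omega


lemma exists_good_even [Fintype V] (E0 NB J : Finset (Sym2 V)) (hNB : NB ⊆ E0) (hJ : J ⊆ E0)
    (hcyc : ∀ e ∈ NB, ∃ C₀, C₀ ⊆ E0 ∧ (∀ v, Even (fdeg C₀ v)) ∧ e ∈ C₀) :
    ∃ C, C ⊆ E0 ∧ (∀ v, Even (fdeg C v)) ∧
      2 * (symmDiff J C).card + NB.card ≤ 2 * E0.card := by
  classical
  set Z := E0.powerset.filter (fun C => ∀ v, Even (fdeg C v)) with hZ
  have hmemZ : ∀ C, C ∈ Z ↔ (C ⊆ E0 ∧ ∀ v, Even (fdeg C v)) := by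
    intro C; simp [hZ, Finset.mem_filter, Finset.mem_powerset]
  have hempty : ∅ ∈ Z := by
    rw [hmemZ]; exact ⟨Finset.empty_subset _, fun v => by simp [fdeg]⟩
  have hZne : Z.Nonempty := ⟨∅, hempty⟩
  have hclosed : ∀ C₁, C₁ ∈ Z → ∀ C₂, C₂ ∈ Z → symmDiff C₁ C₂ ∈ Z := by
    intro C₁ h1 C₂ h2
    rw [hmemZ] at h1 h2 ⊢
    refine ⟨fun e he => ?_, fun v => ?_⟩
    · rw [mem_symmDiff'] at he
      rcases he with ⟨he, -⟩ | ⟨he, -⟩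
      · exact h1.1 he
      · exact h2.1 he
    · have := fdeg_symmDiff C₁ C₂ v
      have e1 := h1.2 v; have e2 := h2.2 v
      rw [Nat.even_iff] at e1 e2 ⊢
      omega
  have hkey : ∀ e ∈ NB, 2 * (Z.filter (fun C => e ∈ symmDiff J C)).card = Z.card := by
    intro e he
    obtain ⟨C₀, hC₀sub, hC₀even, heC₀⟩ := hcyc e he
    have hC₀Z : C₀ ∈ Z := (hmemZ C₀).mpr ⟨hC₀sub, hC₀even⟩
    have hflip : ∀ C : Finset (Sym2 V),
        (e ∈ symmDiff J (symmDiff C C₀)) ↔ ¬ (e ∈ symmDiff J C) := by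
      intro C
      simp only [mem_symmDiff']
      by_cases h1 : e ∈ J <;> by_cases h2 : e ∈ C <;> simp [h1, h2, heC₀]
    have hcards : (Z.filter (fun C => e ∈ symmDiff J C)).card =
        (Z.filter (fun C => ¬ e ∈ symmDiff J C)).card := by
      apply Finset.card_nbij' (fun C => symmDiff C C₀) (fun C => symmDiff C C₀)
      · intro C hC
        rw [Finset.mem_coe, Finset.mem_filter] at hC ⊢
        exact ⟨hclosed _ hC.1 _ hC₀Z, fun h => ((hflip C).mp h) hC.2⟩
      · intro C hC
        rw [Finset.mem_coe, Finset.mem_filter] at hC ⊢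
        exact ⟨hclosed _ hC.1 _ hC₀Z, (hflip C).mpr hC.2⟩
      · intro C _; exact symmDiff_symmDiff_cancel_right C₀ C
      · intro C _; exact symmDiff_symmDiff_cancel_right C₀ C
    have htot := Finset.card_filter_add_card_filter_not
      (s := Z) (p := fun C => e ∈ symmDiff J C)
    omega
  -- counting function
  set cnt : Sym2 V → ℕ := fun e => (Z.filter (fun C => e ∈ symmDiff J C)).card with hcnt
  have hcnt_le : ∀ e, cnt e ≤ Z.card := fun e => Finset.card_filter_le _ _
  -- the double counting identity
  have hsum : ∑ C ∈ Z, (symmDiff J C).card = ∑ e ∈ E0, cnt e := by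
    have hterm : ∀ C ∈ Z, (symmDiff J C).card = ∑ e ∈ E0, if e ∈ symmDiff J C then 1 else 0 := by
      intro C hC
      rw [← Finset.card_filter]
      congr 1
      have hsub : symmDiff J C ⊆ E0 := by
        intro e he
        rw [mem_symmDiff'] at he
        rcases he with ⟨he, -⟩ | ⟨he, -⟩
        · exact hJ he
        · exact ((hmemZ C).mp hC).1 he
      rw [Finset.filter_mem_eq_inter, Finset.inter_eq_right.mpr hsub]
    rw [Finset.sum_congr rfl hterm, Finset.sum_comm]
    refine Finset.sum_congr rfl (fun e _ => ?_)
    show (∑ C ∈ Z, if e ∈ symmDiff J C then 1 else 0)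
      = (Z.filter (fun C => e ∈ symmDiff J C)).card
    rw [Finset.card_filter]
  -- bound the double count
  have hbound : 2 * ∑ e ∈ E0, cnt e ≤ Z.card * NB.card + 2 * Z.card * (E0.card - NB.card) := by
    have h1 : 2 * ∑ e ∈ E0, cnt e = ∑ e ∈ E0, 2 * cnt e := by rw [Finset.mul_sum]
    have h2 : ∀ e ∈ E0, 2 * cnt e ≤ if e ∈ NB then Z.card else 2 * Z.card := by
      intro e _
      split
      · next h => exact le_of_eq (hkey e h)
      · have := hcnt_le e; omega
    have h3 : ∑ e ∈ E0, (if e ∈ NB then Z.card else 2 * Z.card)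
        = Z.card * NB.card + 2 * Z.card * (E0.card - NB.card) := by
      rw [Finset.sum_ite, Finset.sum_const, Finset.sum_const, smul_eq_mul, smul_eq_mul]
      have hfNB : E0.filter (fun e => e ∈ NB) = NB := by
        rw [Finset.filter_mem_eq_inter, Finset.inter_eq_right.mpr hNB]
      have hfc := Finset.card_filter_add_card_filter_not
        (s := E0) (p := fun e => e ∈ NB)
      rw [hfNB] at hfc ⊢
      have hneg : (E0.filter (fun e => ¬ e ∈ NB)).card = E0.card - NB.card := by omega
      rw [hneg]
      have hle := Finset.card_le_card hNB
      ring
    calc 2 * ∑ e ∈ E0, cnt e = ∑ e ∈ E0, 2 * cnt e := h1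
      _ ≤ ∑ e ∈ E0, (if e ∈ NB then Z.card else 2 * Z.card) := Finset.sum_le_sum h2
      _ = _ := h3
  -- average: pick a good C
  have havg : ∃ C ∈ Z, 2 * (symmDiff J C).card + NB.card ≤ 2 * E0.card := by
    apply Finset.exists_le_of_sum_le hZne
      (f := fun C => 2 * (symmDiff J C).card + NB.card) (g := fun _ => 2 * E0.card)
    have hlhs : ∑ C ∈ Z, (2 * (symmDiff J C).card + NB.card)
        = 2 * (∑ C ∈ Z, (symmDiff J C).card) + Z.card * NB.card := by
      rw [Finset.sum_add_distrib, Finset.sum_const, smul_eq_mul, Finset.mul_sum]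
    have hrhs : ∑ _C ∈ Z, (2 * E0.card) = Z.card * (2 * E0.card) := by
      rw [Finset.sum_const, smul_eq_mul]
    rw [hlhs, hrhs, hsum]
    have hle := Finset.card_le_card hNB
    have hsp : E0.card = NB.card + (E0.card - NB.card) := by omega
    have hrw : Z.card * (2 * E0.card)
        = Z.card * NB.card + (Z.card * NB.card + 2 * Z.card * (E0.card - NB.card)) := by
      calc Z.card * (2 * E0.card)
          = Z.card * (2 * (NB.card + (E0.card - NB.card))) := by rw [← hsp]
        _ = _ := by ring
    linarith [hbound]
  obtain ⟨C, hCZ, hCle⟩ := havg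
  exact ⟨C, ((hmemZ C).mp hCZ).1, ((hmemZ C).mp hCZ).2, hCle⟩


end Stmt2Aux
end Stmt2AuxSec

/-- if `G⁺` is connected then for every `S ⊆ E⁻(G,σ)` there is an even
subgraph `H` with `S ⊆ E(H) ⊆ E(G⁺) ∪ S` and `2|E(H)| ≤ 2|E(G)| − |E(Ĝ⁺)|`. -/
theorem stmt2 {V : Type*} [Fintype V] (G : SimpleGraph V) (σ : Sym2 V → Bool)
    (hpos : (gplus G σ).Connected) (S : Set (Sym2 V)) (hS : S ⊆ negEdgeSet G σ) :
    ∃ H : Set (Sym2 V), IsEvenEdgeSet G H ∧ S ⊆ H ∧ H ⊆ posEdgeSet G σ ∪ S ∧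
      2 * H.ncard + (nonBridgeEdges (gplus G σ)).ncard ≤ 2 * G.edgeSet.ncard := by
  classical
  set G' := gplus G σ with hG'
  have hSfin : S.Finite := Set.toFinite S
  set S' := hSfin.toFinset with hS'
  have hEfin : (G'.edgeSet).Finite := Set.toFinite _
  set E0 := hEfin.toFinset with hE0
  have hNBfin : (nonBridgeEdges G').Finite := Set.toFinite _
  set NB := hNBfin.toFinset with hNBdef
  have hG'sub : G'.edgeSet ⊆ G.edgeSet := by
    rw [hG']
    exact SimpleGraph.edgeSet_mono (SimpleGraph.deleteEdges_le _)
  have hneg : ∀ e ∈ S', σ e = true ∧ e ∈ G.edgeSet := by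
    intro e he
    have := hS (hSfin.mem_toFinset.mp he)
    exact ⟨this.2, this.1⟩
  have hposE : ∀ e ∈ G'.edgeSet, e ∈ G.edgeSet ∧ σ e = false := by
    intro e he
    rw [hG', gplus, SimpleGraph.edgeSet_deleteEdges] at he
    refine ⟨he.1, ?_⟩
    have := he.2
    simp only [Set.mem_setOf_eq] at this
    exact Bool.not_eq_true _ ▸ (by simpa using this)
  set T := Finset.univ.filter (fun v => Odd (Stmt2Aux.fdeg S' v)) with hT
  have hTeven : Even T.card :=
    Stmt2Aux.even_card_odd_fdeg S'
      (fun e he => G.not_isDiag_of_mem_edgeSet (hneg e he).2)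
  obtain ⟨J, hJsub, hJdeg⟩ := Stmt2Aux.exists_tjoin hpos T.card T rfl hTeven
  have hJE0 : J ⊆ E0 := fun e he => hEfin.mem_toFinset.mpr (hJsub e he)
  have hNBE0 : NB ⊆ E0 := by
    intro e he
    rw [hNBdef, Set.Finite.mem_toFinset] at he
    exact hEfin.mem_toFinset.mpr he.1
  have hcyc : ∀ e ∈ NB, ∃ C₀, C₀ ⊆ E0 ∧ (∀ v, Even (Stmt2Aux.fdeg C₀ v)) ∧ e ∈ C₀ := by
    intro e he
    rw [hNBdef, Set.Finite.mem_toFinset] at he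
    obtain ⟨heE, hb⟩ := he
    rw [SimpleGraph.isBridge_iff_forall_cycle_notMem heE] at hb
    push_neg at hb
    obtain ⟨u, p, hp, hep⟩ := hb
    refine ⟨p.edges.toFinset, ?_, fun v => Stmt2Aux.cycle_fdeg_even p hp v, by
      simpa using hep⟩
    intro f hf
    rw [List.mem_toFinset] at hf
    exact hEfin.mem_toFinset.mpr (p.edges_subset_edgeSet hf)
  obtain ⟨C, hCsub, hCeven, hCle⟩ := Stmt2Aux.exists_good_even E0 NB J hNBE0 hJE0 hcyc
  set K := symmDiff J C with hK
  have hKE0 : K ⊆ E0 := by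
    intro e he
    rw [hK, Stmt2Aux.mem_symmDiff'] at he
    rcases he with ⟨h, -⟩ | ⟨h, -⟩
    · exact hJE0 h
    · exact hCsub h
  have hKG' : ∀ e ∈ K, e ∈ G'.edgeSet := fun e he => hEfin.mem_toFinset.mp (hKE0 he)
  have hdisj : Disjoint S' K := by
    rw [Finset.disjoint_left]
    intro e heS heK
    have h1 := (hneg e heS).1
    have h2 := (hposE e (hKG' e heK)).2
    rw [h1] at h2
    exact Bool.noConfusion h2
  have hunion : symmDiff S' K = S' ∪ K := hdisj.symmDiff_eq_sup
  refine ⟨↑(S' ∪ K), ⟨?_, ?_⟩, ?_, ?_, ?_⟩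
  · -- subset of edgeSet
    intro e he
    rcases Finset.mem_union.mp (Finset.mem_coe.mp he) with h | h
    · exact (hneg e h).2
    · exact hG'sub (hKG' e h)
  · -- even degrees
    intro v
    have hset : {e ∈ (↑(S' ∪ K) : Set (Sym2 V)) | v ∈ e}
        = ↑((S' ∪ K).filter (fun e => v ∈ e)) := by
      ext e; simp
    rw [hset, Set.ncard_coe_finset]
    show Even (Stmt2Aux.fdeg (S' ∪ K) v)
    rw [← hunion]
    have h1 := Stmt2Aux.fdeg_symmDiff S' K v
    have h2 := Stmt2Aux.fdeg_symmDiff J C v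
    have h3 := hCeven v
    have h5 : Odd (Stmt2Aux.fdeg J v) ↔ Odd (Stmt2Aux.fdeg S' v) := by
      rw [hJdeg v, hT]; simp
    rw [Nat.odd_iff, Nat.odd_iff] at h5
    have h5' : Stmt2Aux.fdeg J v % 2 = Stmt2Aux.fdeg S' v % 2 := by
      by_cases h : Stmt2Aux.fdeg S' v % 2 = 1
      · rw [h]; exact h5.mpr h
      · have h6 : ¬ (Stmt2Aux.fdeg J v % 2 = 1) := fun hh => h (h5.mp hh)
        omega
    rw [Nat.even_iff] at h3 ⊢
    rw [hK] at *
    omega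
  · -- S ⊆ H
    intro e he
    exact Finset.mem_coe.mpr (Finset.mem_union_left K (hSfin.mem_toFinset.mpr he))
  · -- H ⊆ pos ∪ S
    intro e he
    rcases Finset.mem_union.mp (Finset.mem_coe.mp he) with h | h
    · exact Set.mem_union_right _ (hSfin.mem_toFinset.mp h)
    · have := hposE e (hKG' e h)
      exact Set.mem_union_left _ ⟨this.1, this.2⟩
  · -- cardinality bound
    have hcard1 : (↑(S' ∪ K) : Set (Sym2 V)).ncard = S'.card + K.card := by
      rw [Set.ncard_coe_finset, Finset.card_union_of_disjoint hdisj]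
    have hcard2 : (nonBridgeEdges (gplus G σ)).ncard = NB.card := by
      rw [hNBdef, Set.ncard_eq_toFinset_card _ hNBfin]
    have hEGfin : (G.edgeSet).Finite := Set.toFinite _
    have hcard3 : G.edgeSet.ncard = hEGfin.toFinset.card :=
      Set.ncard_eq_toFinset_card _ hEGfin
    have hdisj2 : Disjoint S' E0 := by
      rw [Finset.disjoint_left]
      intro e he1 he2
      have h2 := (hposE e (hEfin.mem_toFinset.mp he2)).2
      rw [(hneg e he1).1] at h2
      exact Bool.noConfusion h2
    have hsub2 : S' ∪ E0 ⊆ hEGfin.toFinset := by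
      intro e he
      rcases Finset.mem_union.mp he with h | h
      · exact hEGfin.mem_toFinset.mpr (hneg e h).2
      · exact hEGfin.mem_toFinset.mpr (hG'sub (hEfin.mem_toFinset.mp h))
    have hcard4 : S'.card + E0.card ≤ hEGfin.toFinset.card := by
      rw [← Finset.card_union_of_disjoint hdisj2]
      exact Finset.card_le_card hsub2
    rw [hcard1, hcard2, hcard3]
    omega
end

section
/- Let (G,σ) be a signed graph and let C and C' be edge-disjoint negative cycles of (G,σ) that share at least two vertices. Then the edge set E(C) ∪ E(C') can be partitioned into the edge sets of pairwise edge-disjoint cycles of G, at least one of which is a positive cycle of (G,σ). -/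
open SimpleGraph Set

variable {V : Type*}

section Aux
variable {G : SimpleGraph V}

/-- any edge of a path `cons h q'` containing the start is the first edge -/
lemma aux_first_edge {b c a : V} (h : G.Adj b c) (q' : G.Walk c a)
    (hq : (SimpleGraph.Walk.cons h q').IsPath) {e : Sym2 V}
    (he : e ∈ (SimpleGraph.Walk.cons h q').edges) (hb : b ∈ e) : e = s(b, c) := by
  rw [SimpleGraph.Walk.edges_cons, List.mem_cons] at he
  rcases he with rfl | he
  · rfl
  · exfalso
    rw [SimpleGraph.Walk.cons_isPath_iff] at hq
    induction e using Sym2.ind with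
    | _ x y =>
      rw [Sym2.mem_iff] at hb
      rcases hb with rfl | rfl
      · exact hq.2 (SimpleGraph.Walk.fst_mem_support_of_mem_edges q' he)
      · exact hq.2 (SimpleGraph.Walk.snd_mem_support_of_mem_edges q' he)

/-- a path with positive length has distinct endpoints -/
lemma aux_path_ne {a b : V} {p : G.Walk a b} (hp : p.IsPath) (hn : ¬ p.Nil) : a ≠ b := by
  rw [SimpleGraph.Walk.not_nil_iff] at hn
  obtain ⟨u, h, q, rfl⟩ := hn
  rw [SimpleGraph.Walk.cons_isPath_iff] at hp
  rintro rfl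
  exact hp.2 (SimpleGraph.Walk.end_mem_support q)

/-- the edges of a nontrivial path containing the endpoint form a singleton -/
lemma aux_end_edges {a b : V} (p : G.Walk a b) (hp : p.IsPath) (hnil : ¬ p.Nil) :
    ∃ c, G.Adj b c ∧ {e ∈ {e | e ∈ p.edges} | b ∈ e} = {s(b, c)} := by
  have hnr : ¬ p.reverse.Nil := by
    rwa [SimpleGraph.Walk.nil_iff_length_eq, SimpleGraph.Walk.length_reverse,
      ← SimpleGraph.Walk.nil_iff_length_eq]
  rw [SimpleGraph.Walk.not_nil_iff] at hnr
  obtain ⟨c, h, q, hq⟩ := hnr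
  refine ⟨c, h, ?_⟩
  ext e
  simp only [Set.mem_setOf_eq, Set.mem_singleton_iff, Set.mem_sep_iff]
  constructor
  · rintro ⟨he, hbe⟩
    have he' : e ∈ p.reverse.edges := by
      rw [SimpleGraph.Walk.edges_reverse, List.mem_reverse]; exact he
    rw [hq] at he'
    exact aux_first_edge h q (hq ▸ hp.reverse) he' hbe
  · rintro rfl
    constructor
    · have : s(b, c) ∈ p.reverse.edges := by
        rw [hq]; exact List.mem_cons_self
      rwa [SimpleGraph.Walk.edges_reverse, List.mem_reverse] at this
    · exact Sym2.mem_mk_left _ _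

lemma aux_mem_support_of_mem_edge {a b v : V} {p : G.Walk a b} {e : Sym2 V}
    (he : e ∈ p.edges) (hv : v ∈ e) : v ∈ p.support := by
  induction e using Sym2.ind with
  | _ x y =>
    rw [Sym2.mem_iff] at hv
    rcases hv with rfl | rfl
    · exact SimpleGraph.Walk.fst_mem_support_of_mem_edges p he
    · exact SimpleGraph.Walk.snd_mem_support_of_mem_edges p he

/-- incident edge count at a vertex of a cycle is 0 or 2 -/
lemma aux_cycle_incident {u : V} (c : G.Walk u u) (hc : c.IsCycle) (v : V) :
    {e ∈ {e | e ∈ c.edges} | v ∈ e}.ncard = 0 ∨ {e ∈ {e | e ∈ c.edges} | v ∈ e}.ncard = 2 := by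
  classical
  by_cases hv : v ∈ c.support
  · right
    -- rotate to start at v
    have hrot := hc.rotate hv
    set c' := c.rotate v hv with hc'def
    have hmem : ∀ e, e ∈ c'.edges ↔ e ∈ c.edges :=
      fun e => (SimpleGraph.Walk.rotate_edges c v hv).mem_iff
    have hset : {e ∈ {e | e ∈ c.edges} | v ∈ e} = {e ∈ {e | e ∈ c'.edges} | v ∈ e} := by
      ext e; simp [hmem]
    rw [hset]
    have hnil : ¬ c'.Nil := by
      rw [SimpleGraph.Walk.not_nil_iff_lt_length]
      have := hrot.three_le_length; omega
    rw [SimpleGraph.Walk.not_nil_iff] at hnil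
    obtain ⟨w, h, q, hq⟩ := hnil
    have hq' : q.IsPath ∧ s(v, w) ∉ q.edges := by
      rw [← SimpleGraph.Walk.cons_isCycle_iff, ← hq]; exact hrot; exact h
    have hqnil : ¬ q.Nil := by
      rw [SimpleGraph.Walk.not_nil_iff_lt_length]
      have h3 := hrot.three_le_length
      rw [hq] at h3; simp only [SimpleGraph.Walk.length_cons] at h3; omega
    obtain ⟨d, hd, hds⟩ := aux_end_edges q hq'.1 hqnil
    have : {e ∈ {e | e ∈ c'.edges} | v ∈ e} = {s(v, w), s(v, d)} := by
      ext e
      simp only [Set.mem_sep_iff, Set.mem_setOf_eq, Set.mem_insert_iff, Set.mem_singleton_iff]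
      constructor
      · rintro ⟨he, hve⟩
        rw [hq, SimpleGraph.Walk.edges_cons, List.mem_cons] at he
        rcases he with rfl | he
        · left; rfl
        · right
          have : e ∈ {e ∈ {e | e ∈ q.edges} | v ∈ e} := ⟨he, hve⟩
          rwa [hds, Set.mem_singleton_iff] at this
      · rintro (rfl | rfl)
        · exact ⟨by rw [hq]; exact List.mem_cons_self, Sym2.mem_mk_left _ _⟩
        · have : s(v, d) ∈ {e ∈ {e | e ∈ q.edges} | v ∈ e} := by rw [hds]; rfl
          exact ⟨by rw [hq, SimpleGraph.Walk.edges_cons]; exact List.mem_cons_of_mem _ this.1,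
            Sym2.mem_mk_left _ _⟩
    rw [this]
    apply Set.ncard_pair
    intro hcontr
    have : s(v, d) ∈ {e ∈ {e | e ∈ q.edges} | v ∈ e} := by rw [hds]; rfl
    exact hq'.2 (hcontr ▸ this.1)
  · left
    rw [Set.ncard_eq_zero ((List.finite_toSet c.edges).subset (fun e he => he.1))]
    · ext e
      simp only [Set.mem_sep_iff, Set.mem_setOf_eq, Set.mem_empty_iff_false, iff_false, not_and]
      intro he hve
      exact hv (aux_mem_support_of_mem_edge he hve)

/-- a graph with all even incidence counts containing an edge contains a cycle -/
lemma aux_exists_cycle [Fintype V] (GH : SimpleGraph V)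
    (heven : ∀ v, Even {e ∈ GH.edgeSet | v ∈ e}.ncard)
    {x y : V} (hxy : GH.Adj x y) : ∃ (u : V) (c : GH.Walk u u), c.IsCycle := by
  classical
  set L : Set ℕ := {n | ∃ (a b : V) (p : GH.Walk a b), p.IsPath ∧ p.length = n} with hL
  have h1 : 1 ∈ L := ⟨x, y, Walk.cons hxy Walk.nil, by simp [hxy.ne], by simp⟩
  have hbdd : BddAbove L := by
    refine ⟨Fintype.card V, ?_⟩
    rintro n ⟨a, b, p, hp, rfl⟩
    exact le_of_lt hp.length_lt
  have hmem : sSup L ∈ L := Nat.sSup_mem ⟨1, h1⟩ hbdd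
  obtain ⟨a, b, p, hp, hlen⟩ := hmem
  have hpos : 0 < p.length := by
    rw [hlen]; exact lt_of_lt_of_le Nat.one_pos (le_csSup hbdd h1)
  have hnil : ¬ p.Nil := by rwa [SimpleGraph.Walk.not_nil_iff_lt_length]
  obtain ⟨d, hbd, hds⟩ := aux_end_edges p hp hnil
  -- incidence set of b has ≥ 2 elements
  have hfin : {e ∈ GH.edgeSet | b ∈ e}.Finite := Set.toFinite _
  have hdmem : s(b, d) ∈ {e ∈ GH.edgeSet | b ∈ e} := ⟨hbd, Sym2.mem_mk_left _ _⟩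
  have h2 : 1 < {e ∈ GH.edgeSet | b ∈ e}.ncard := by
    have hne : {e ∈ GH.edgeSet | b ∈ e}.ncard ≠ 0 := by
      intro h0
      rw [Set.ncard_eq_zero hfin] at h0
      rw [h0] at hdmem; exact hdmem
    obtain ⟨k, hk⟩ := heven b
    omega
  obtain ⟨f, hf, hfne⟩ := Set.exists_ne_of_one_lt_ncard h2 (s(b, d))
  obtain ⟨hfE, hbf⟩ := hf
  -- write f = s(b, w)
  set w := Sym2.Mem.other hbf with hwdef
  have hfeq : f = s(b, w) := (Sym2.other_spec hbf).symm
  have hadj : GH.Adj b w := by rw [← SimpleGraph.mem_edgeSet, ← hfeq]; exact hfE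
  have hfnp : f ∉ p.edges := by
    intro hfp
    have : f ∈ {e ∈ {e | e ∈ p.edges} | b ∈ e} := ⟨hfp, hbf⟩
    rw [hds, Set.mem_singleton_iff] at this
    exact hfne this
  have hw : w ∈ p.support := by
    by_contra hws
    have hws' : w ∉ p.reverse.support := by rwa [SimpleGraph.Walk.support_reverse, List.mem_reverse]
    have hext : (Walk.cons hadj.symm p.reverse).IsPath := by
      rw [SimpleGraph.Walk.cons_isPath_iff]
      exact ⟨hp.reverse, hws'⟩
    have : p.length + 1 ∈ L := ⟨w, a, _, hext, by simp⟩
    have := le_csSup hbdd this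
    omega
  refine ⟨b, Walk.cons hadj (p.dropUntil w hw), ?_⟩
  rw [SimpleGraph.Walk.cons_isCycle_iff]
  refine ⟨hp.dropUntil hw, fun hmem => hfnp ?_⟩
  rw [hfeq]
  exact SimpleGraph.Walk.edges_dropUntil_subset p hw hmem

lemma aux_even_sub {m k : ℕ} (hm : Even m) (hk : Even k) : Even (m - k) := by
  obtain ⟨a, rfl⟩ := hm; obtain ⟨b, rfl⟩ := hk; exact ⟨a - b, by omega⟩

lemma aux_even_decomp [Fintype V] (G : SimpleGraph V) (n : ℕ) :
    ∀ (H : Set (Sym2 V)), H.ncard ≤ n → H ⊆ G.edgeSet →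
    (∀ v, Even {e ∈ H | v ∈ e}.ncard) →
    ∃ 𝓠 : Finset (Set (Sym2 V)), (∀ D ∈ 𝓠, ∃ SD, IsCycleSet G D SD) ∧
      (𝓠 : Set (Set (Sym2 V))).PairwiseDisjoint id ∧ (⋃ D ∈ 𝓠, D) = H := by
  classical
  induction n with
  | zero =>
    intro H hcard _ _
    have hH : H = ∅ := by
      rw [← Set.ncard_eq_zero (Set.toFinite H)]; omega
    exact ⟨∅, by simp, by simp, by simp [hH]⟩
  | succ n ih =>
    intro H hcard hsub heven
    rcases H.eq_empty_or_nonempty with hH | ⟨f, hf⟩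
    · exact ⟨∅, by simp, by simp, by simp [hH]⟩
    · set GH := SimpleGraph.fromEdgeSet H with hGHdef
      have hGH : GH.edgeSet = H := by
        rw [hGHdef, edgeSet_fromEdgeSet]
        apply Set.Subset.antisymm Set.diff_subset
        intro e he
        exact ⟨he, fun hd => G.not_isDiag_of_mem_edgeSet (hsub he) hd⟩
      have hadj : ∃ x y, GH.Adj x y := by
        induction f using Sym2.ind with
        | _ x y => exact ⟨x, y, by rw [← SimpleGraph.mem_edgeSet, hGH]; exact hf⟩
      obtain ⟨x, y, hxy⟩ := hadj
      obtain ⟨u, c, hc⟩ := aux_exists_cycle GH (fun v => by rw [hGH]; exact heven v) hxy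
      set Cset : Set (Sym2 V) := {e | e ∈ c.edges} with hCdef
      have hCH : Cset ⊆ H := fun e he => hGH ▸ c.edges_subset_edgeSet he
      have hCG : ∀ e ∈ c.edges, e ∈ G.edgeSet := fun e he => hsub (hCH he)
      have hcyc : ∃ SD, IsCycleSet G Cset SD :=
        ⟨{x | x ∈ (c.transfer G hCG).support}, u, c.transfer G hCG, hc.transfer hCG,
          by rw [SimpleGraph.Walk.edges_transfer], rfl⟩
      have hCne : Cset.Nonempty := by
        have hnil : ¬ c.Nil := by
          rw [SimpleGraph.Walk.not_nil_iff_lt_length]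
          have := hc.three_le_length; omega
        rw [SimpleGraph.Walk.not_nil_iff] at hnil
        obtain ⟨w, h, q, hq⟩ := hnil
        exact ⟨s(u, w), by rw [hCdef, Set.mem_setOf_eq, hq]; exact List.mem_cons_self⟩
      have hCpos : 0 < Cset.ncard := (Set.ncard_pos (Set.toFinite _)).mpr hCne
      set H' := H \ Cset with hH'def
      have hcard' : H'.ncard ≤ n := by
        rw [hH'def, Set.ncard_diff hCH (Set.toFinite _)]
        omega
      have heven' : ∀ v, Even {e ∈ H' | v ∈ e}.ncard := by
        intro v
        have hseteq : {e ∈ H' | v ∈ e} = {e ∈ H | v ∈ e} \ {e ∈ Cset | v ∈ e} := by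
          ext e; simp only [hH'def, Set.mem_sep_iff, Set.mem_diff, Set.mem_setOf_eq]; tauto
        have hsub2 : {e ∈ Cset | v ∈ e} ⊆ {e ∈ H | v ∈ e} := fun e he => ⟨hCH he.1, he.2⟩
        rw [hseteq, Set.ncard_diff hsub2 (Set.toFinite _)]
        apply aux_even_sub (heven v)
        rcases aux_cycle_incident c hc v with h0 | h2
        · rw [hCdef]; rw [h0]; exact Even.zero
        · rw [hCdef]; rw [h2]; exact ⟨1, rfl⟩
      obtain ⟨𝓠', h𝓠cyc, h𝓠pd, h𝓠un⟩ := ih H' hcard' (fun e he => hsub he.1) heven'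
      refine ⟨insert Cset 𝓠', ?_, ?_, ?_⟩
      · intro D hD
        rcases Finset.mem_insert.mp hD with rfl | hD
        · exact hcyc
        · exact h𝓠cyc D hD
      · rw [Finset.coe_insert]
        apply Set.PairwiseDisjoint.insert h𝓠pd
        intro D hD _
        have hDsub : D ⊆ H' := by
          intro a ha
          rw [← h𝓠un]
          exact Set.mem_biUnion hD ha
        exact Set.disjoint_of_subset_right hDsub disjoint_sdiff_right
      · rw [Finset.set_biUnion_insert, h𝓠un, Set.union_diff_cancel hCH]

lemma aux_first_S {S : Set V} {a b : V} (w : G.Walk a b) (hb : b ∈ S) (hnil : ¬ w.Nil) :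
    ∃ (v : V) (q : G.Walk a v) (r : G.Walk v b), w = q.append r ∧ v ∈ S ∧ ¬ q.Nil ∧
      ∀ x ∈ q.support, x ∈ S → x = a ∨ x = v := by
  induction w with
  | nil => simp at hnil
  | @cons a c b h w' ih =>
    by_cases hcS : c ∈ S
    · refine ⟨c, Walk.cons h Walk.nil, w', (Walk.cons_nil_append h w').symm, hcS,
        Walk.not_nil_cons, ?_⟩
      intro x hx _
      simp only [Walk.support_cons, Walk.support_nil, List.mem_cons, List.mem_singleton,
        List.not_mem_nil, or_false] at hx
      tauto
    · have hnil' : ¬ w'.Nil := by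
        intro hn
        exact hcS (hn.eq ▸ hb)
      obtain ⟨v, q, r, heq, hvS, hqnil, hint⟩ := ih hb hnil'
      refine ⟨v, Walk.cons h q, r, by rw [Walk.cons_append, ← heq], hvS, Walk.not_nil_cons, ?_⟩
      intro x hx hxS
      rw [Walk.support_cons, List.mem_cons] at hx
      rcases hx with rfl | hx
      · exact Or.inl rfl
      · rcases hint x hx hxS with rfl | rfl
        · exact absurd hxS hcS
        · exact Or.inr rfl

lemma aux_closed_tail_mem {u : V} {c : G.Walk u u} (hnil : ¬ c.Nil) {x : V} :
    x ∈ c.support ↔ x ∈ c.support.tail := by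
  rw [SimpleGraph.Walk.not_nil_iff] at hnil
  obtain ⟨w, h, q, rfl⟩ := hnil
  rw [Walk.support_cons]
  simp only [List.tail_cons, List.mem_cons]
  constructor
  · rintro (rfl | hx)
    · exact q.end_mem_support
    · exact hx
  · exact Or.inr

lemma aux_cycle_split [DecidableEq V] {u : V} {c : G.Walk u u} (hc : c.IsCycle) {t : V}
    (ht : t ∈ c.support) (hne : t ≠ u) :
    (c.takeUntil t ht).IsPath ∧ (c.dropUntil t ht).IsPath := by
  rw [Walk.isCycle_def] at hc
  have hT : c.support.tail.Nodup := hc.2.2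
  have hs := congrArg Walk.support (Walk.take_spec c ht)
  rw [Walk.support_append] at hs
  have hsup1 : (c.takeUntil t ht).support = u :: (c.takeUntil t ht).support.tail :=
    Walk.support_eq_cons _
  have hsupc : c.support = u :: c.support.tail := Walk.support_eq_cons _
  set T₁ := (c.takeUntil t ht).support.tail with hT₁
  set T₂ := (c.dropUntil t ht).support.tail with hT₂
  have hTsplit : T₁ ++ T₂ = c.support.tail := by
    have : (u :: T₁) ++ T₂ = u :: c.support.tail := by
      rw [← hsup1, hs, ← hsupc]
    exact congrArg List.tail this
  rw [← hTsplit, List.nodup_append] at hT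
  obtain ⟨hT₁n, hT₂n, hdisj⟩ := hT
  have hdnil : ¬ (c.dropUntil t ht).Nil := Walk.not_nil_of_ne hne
  have huT₂ : u ∈ T₂ := by
    rw [Walk.not_nil_iff] at hdnil
    obtain ⟨w, h, q, hq⟩ := hdnil
    rw [hT₂, hq, Walk.support_cons, List.tail_cons]
    exact q.end_mem_support
  have htake : (c.takeUntil t ht).IsPath := by
    apply Walk.IsPath.mk'
    rw [hsup1]
    exact List.nodup_cons.mpr ⟨fun hu => hdisj _ hu _ huT₂ rfl, hT₁n⟩
  have htT₁ : t ∈ T₁ := by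
    have := (c.takeUntil t ht).end_mem_support
    rw [hsup1, List.mem_cons] at this
    rcases this with h' | h'
    · exact absurd h' hne
    · exact h'
  have hdrop : (c.dropUntil t ht).IsPath := by
    apply Walk.IsPath.mk'
    rw [Walk.support_eq_cons (c.dropUntil t ht)]
    exact List.nodup_cons.mpr ⟨fun htT₂ => hdisj _ htT₁ _ htT₂ rfl, hT₂n⟩
  exact ⟨htake, hdrop⟩

lemma aux_filter_union_ncard [Fintype V] {X Y : Set (Sym2 V)} (h : Disjoint X Y)
    (P : Sym2 V → Prop) :
    {e ∈ X ∪ Y | P e}.ncard = {e ∈ X | P e}.ncard + {e ∈ Y | P e}.ncard := by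
  have hset : {e ∈ X ∪ Y | P e} = {e ∈ X | P e} ∪ {e ∈ Y | P e} := by
    ext e; simp only [Set.mem_setOf_eq, Set.mem_union]; tauto
  rw [hset]
  exact Set.ncard_union_eq
    (Set.disjoint_of_subset (fun e he => he.1) (fun e he => he.1) h)
    (Set.toFinite _) (Set.toFinite _)

lemma aux_assemble [Fintype V] (G : SimpleGraph V) (σ : Sym2 V → Bool)
    {C C' : Set (Sym2 V)} (hCG : C ⊆ G.edgeSet) (hC'G : C' ⊆ G.edgeSet)
    (hdisj : Disjoint C C')
    (hCinc : ∀ v, {e ∈ C | v ∈ e}.ncard = 0 ∨ {e ∈ C | v ∈ e}.ncard = 2)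
    (hC'inc : ∀ v, {e ∈ C' | v ∈ e}.ncard = 0 ∨ {e ∈ C' | v ∈ e}.ncard = 2)
    {u₀ : V} (d : G.Walk u₀ u₀) (hd : d.IsCycle)
    (hDsub : {e | e ∈ d.edges} ⊆ C ∪ C')
    (hDeven : Even {e ∈ {e | e ∈ d.edges} | σ e = true}.ncard) :
    ∃ 𝓟 : Finset (Set (Sym2 V)),
      (∀ D ∈ 𝓟, ∃ SD : Set V, IsCycleSet G D SD) ∧
      (𝓟 : Set (Set (Sym2 V))).PairwiseDisjoint id ∧
      (⋃ D ∈ 𝓟, D) = C ∪ C' ∧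
      ∃ D ∈ 𝓟, IsPosCycle G σ D := by
  classical
  set Dset : Set (Sym2 V) := {e | e ∈ d.edges} with hDdef
  set R : Set (Sym2 V) := (C ∪ C') \ Dset with hRdef
  have hRG : R ⊆ G.edgeSet := by
    rintro e ⟨he, -⟩
    rcases he with he | he
    · exact hCG he
    · exact hC'G he
  have hReven : ∀ v, Even {e ∈ R | v ∈ e}.ncard := by
    intro v
    have hseteq : {e ∈ R | v ∈ e} = {e ∈ C ∪ C' | v ∈ e} \ {e ∈ Dset | v ∈ e} := by
      ext e; simp only [hRdef, Set.mem_setOf_eq, Set.mem_diff, Set.mem_union]; tauto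
    have hsub2 : {e ∈ Dset | v ∈ e} ⊆ {e ∈ C ∪ C' | v ∈ e} := fun e he => ⟨hDsub he.1, he.2⟩
    rw [hseteq, Set.ncard_diff hsub2 (Set.toFinite _)]
    apply aux_even_sub
    · rw [aux_filter_union_ncard hdisj]
      have h1 := hCinc v
      have h2 := hC'inc v
      rcases h1 with h1 | h1 <;> rcases h2 with h2 | h2 <;> rw [h1, h2] <;> decide
    · rcases aux_cycle_incident d hd v with h0 | h2
      · rw [hDdef, h0]; exact Even.zero
      · rw [hDdef, h2]; exact ⟨1, rfl⟩
  obtain ⟨𝓠, h𝓠cyc, h𝓠pd, h𝓠un⟩ := aux_even_decomp G R.ncard R le_rfl hRG hReven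
  have hDcycset : ∃ SD, IsCycleSet G Dset SD :=
    ⟨{x | x ∈ d.support}, u₀, d, hd, rfl, rfl⟩
  refine ⟨insert Dset 𝓠, ?_, ?_, ?_, ?_⟩
  · intro D hD
    rcases Finset.mem_insert.mp hD with rfl | hD
    · exact hDcycset
    · exact h𝓠cyc D hD
  · rw [Finset.coe_insert]
    apply Set.PairwiseDisjoint.insert h𝓠pd
    intro D hD _
    have hDsub' : D ⊆ R := by
      intro a ha
      rw [← h𝓠un]
      exact Set.mem_biUnion hD ha
    exact Set.disjoint_of_subset_right hDsub' disjoint_sdiff_right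
  · rw [Finset.set_biUnion_insert, h𝓠un, Set.union_diff_cancel hDsub]
  · exact ⟨Dset, Finset.mem_insert_self _ _, hDcycset, hDeven⟩

end Aux

/-- two edge-disjoint negative cycles sharing at least two vertices
decompose into edge-disjoint cycles, at least one of which is positive. -/
theorem stmt11 {V : Type*} [Fintype V] (G : SimpleGraph V) (σ : Sym2 V → Bool)
    (C C' : Set (Sym2 V)) (S S' : Set V)
    (hC : IsNegCycle G σ C S) (hC' : IsNegCycle G σ C' S')
    (hdisj : Disjoint C C') (hshare : 2 ≤ (S ∩ S').ncard) :
    ∃ 𝓟 : Finset (Set (Sym2 V)),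
      (∀ D ∈ 𝓟, ∃ SD : Set V, IsCycleSet G D SD) ∧
      (𝓟 : Set (Set (Sym2 V))).PairwiseDisjoint id ∧
      (⋃ D ∈ 𝓟, D) = C ∪ C' ∧
      ∃ D ∈ 𝓟, IsPosCycle G σ D := by
  classical
  obtain ⟨⟨v₀, w₀, hw₀, hCeq, hSeq⟩, hCodd⟩ := hC
  obtain ⟨⟨v₀', w₀', hw₀', hC'eq, hS'eq⟩, hC'odd⟩ := hC'
  -- two distinct shared vertices
  have hne0 : (S ∩ S').Nonempty := by
    apply (Set.ncard_pos (Set.toFinite _)).mp; omega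
  obtain ⟨u₀, hu₀⟩ := hne0
  obtain ⟨t, htmem, htne⟩ := Set.exists_ne_of_one_lt_ncard (show 1 < (S ∩ S').ncard by omega) u₀
  -- edge subsets
  have hCG : C ⊆ G.edgeSet := by
    rw [hCeq]; exact fun e he => w₀.edges_subset_edgeSet he
  have hC'G : C' ⊆ G.edgeSet := by
    rw [hC'eq]; exact fun e he => w₀'.edges_subset_edgeSet he
  -- incidence conditions
  have hCinc : ∀ v, {e ∈ C | v ∈ e}.ncard = 0 ∨ {e ∈ C | v ∈ e}.ncard = 2 := by
    intro v; rw [hCeq]; exact aux_cycle_incident w₀ hw₀ v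
  have hC'inc : ∀ v, {e ∈ C' | v ∈ e}.ncard = 0 ∨ {e ∈ C' | v ∈ e}.ncard = 2 := by
    intro v; rw [hC'eq]; exact aux_cycle_incident w₀' hw₀' v
  -- rotate both cycles to start at u₀
  have hw₀nil : ¬ w₀.Nil := by
    rw [Walk.not_nil_iff_lt_length]; have := hw₀.three_le_length; omega
  have hw₀'nil : ¬ w₀'.Nil := by
    rw [Walk.not_nil_iff_lt_length]; have := hw₀'.three_le_length; omega
  have hu₀w₀ : u₀ ∈ w₀.support := by
    have : u₀ ∈ S := hu₀.1
    rwa [hSeq] at this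
  have hu₀w₀' : u₀ ∈ w₀'.support := by
    have : u₀ ∈ S' := hu₀.2
    rwa [hS'eq] at this
  set w : G.Walk u₀ u₀ := w₀.rotate u₀ hu₀w₀ with hwdef
  set w' : G.Walk u₀ u₀ := w₀'.rotate u₀ hu₀w₀' with hw'def
  have hw : w.IsCycle := hw₀.rotate hu₀w₀
  have hw' : w'.IsCycle := hw₀'.rotate hu₀w₀'
  have hwnil : ¬ w.Nil := by
    rw [Walk.not_nil_iff_lt_length]; have := hw.three_le_length; omega
  have hw'nil : ¬ w'.Nil := by
    rw [Walk.not_nil_iff_lt_length]; have := hw'.three_le_length; omega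
  have hCw : C = {e | e ∈ w.edges} := by
    rw [hCeq]; ext e
    simp only [Set.mem_setOf_eq]
    exact ((Walk.rotate_edges w₀ u₀ hu₀w₀).mem_iff).symm
  have hC'w : C' = {e | e ∈ w'.edges} := by
    rw [hC'eq]; ext e
    simp only [Set.mem_setOf_eq]
    exact ((Walk.rotate_edges w₀' u₀ hu₀w₀').mem_iff).symm
  have hSw : S = {x | x ∈ w.support} := by
    rw [hSeq]; ext x
    simp only [Set.mem_setOf_eq]
    rw [aux_closed_tail_mem hw₀nil, aux_closed_tail_mem hwnil]
    exact ((Walk.support_rotate w₀ u₀ hu₀w₀).mem_iff).symm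
  have hS'w : S' = {x | x ∈ w'.support} := by
    rw [hS'eq]; ext x
    simp only [Set.mem_setOf_eq]
    rw [aux_closed_tail_mem hw₀'nil, aux_closed_tail_mem hw'nil]
    exact ((Walk.support_rotate w₀' u₀ hu₀w₀').mem_iff).symm
  -- find first S-vertex v along w' after u₀ (within the segment up to t)
  have htw' : t ∈ w'.support := by
    have : t ∈ S' := htmem.2
    rwa [hS'w, Set.mem_setOf_eq] at this
  set w₁ : G.Walk u₀ t := w'.takeUntil t htw' with hw₁def
  have hw₁path : w₁.IsPath := (aux_cycle_split hw' htw' htne).1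
  have hw₁nil : ¬ w₁.Nil := Walk.not_nil_of_ne (Ne.symm htne)
  have htS : t ∈ S := htmem.1
  obtain ⟨v, q, r, hsplit, hvS, hqnil, hint⟩ := aux_first_S w₁ htS hw₁nil
  have hqpath : q.IsPath := by
    have := hsplit ▸ hw₁path
    exact this.of_append_left
  have hvne : v ≠ u₀ := (aux_path_ne hqpath hqnil).symm
  -- q's edges lie in C'
  have hq1C' : {e | e ∈ q.edges} ⊆ C' := by
    intro e he
    rw [hC'w, Set.mem_setOf_eq]
    apply Walk.edges_takeUntil_subset w' htw'
    have hw₁edges : w₁.edges = q.edges ++ r.edges := by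
      rw [hsplit, Walk.edges_append]
    rw [hw₁edges]
    exact List.mem_append_left _ he
  -- split w at v
  have hvw : v ∈ w.support := by
    have : v ∈ S := hvS
    rwa [hSw, Set.mem_setOf_eq] at this
  set P1 : G.Walk u₀ v := w.takeUntil v hvw with hP1def
  set P2 : G.Walk v u₀ := w.dropUntil v hvw with hP2def
  have hP1path : P1.IsPath := (aux_cycle_split hw hvw hvne).1
  have hP2path : P2.IsPath := (aux_cycle_split hw hvw hvne).2
  have hwedges : w.edges = P1.edges ++ P2.edges := by
    conv_lhs => rw [← Walk.take_spec w hvw]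
    rw [Walk.edges_append]
  have hCsplit : C = {e | e ∈ P1.edges} ∪ {e | e ∈ P2.edges} := by
    rw [hCw]; ext e
    simp only [Set.mem_setOf_eq, Set.mem_union, hwedges, List.mem_append]
  have hp1C : {e | e ∈ P1.edges} ⊆ C := by rw [hCsplit]; exact Set.subset_union_left
  have hp2C : {e | e ∈ P2.edges} ⊆ C := by rw [hCsplit]; exact Set.subset_union_right
  have hp1p2 : Disjoint {e | e ∈ P1.edges} {e | e ∈ P2.edges} := by
    have hnodup : (P1.edges ++ P2.edges).Nodup := by
      rw [← hwedges]; exact hw.isCircuit.isTrail.edges_nodup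
    have hld := List.disjoint_of_nodup_append hnodup
    rw [Set.disjoint_left]
    exact fun e he1 he2 => hld he1 he2
  have hp1q1 : Disjoint {e | e ∈ P1.edges} {e | e ∈ q.edges} :=
    Set.disjoint_of_subset hp1C hq1C' hdisj
  have hp2q1 : Disjoint {e | e ∈ P2.edges} {e | e ∈ q.edges} :=
    Set.disjoint_of_subset hp2C hq1C' hdisj
  -- negative edge counts
  set na := {e ∈ {e | e ∈ P1.edges} | σ e = true}.ncard with hna
  set nb := {e ∈ {e | e ∈ P2.edges} | σ e = true}.ncard with hnb
  set nc := {e ∈ {e | e ∈ q.edges} | σ e = true}.ncard with hnc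
  have hCcount : {e ∈ C | σ e = true}.ncard = na + nb := by
    rw [hCsplit, aux_filter_union_ncard hp1p2]
  have hOdd : Odd (na + nb) := by rw [← hCcount]; exact hCodd
  -- support facts for cycle constructions
  have hP1sup : ∀ x ∈ P1.support, x ∈ S := by
    intro x hx
    rw [hSw, Set.mem_setOf_eq]
    exact Walk.support_takeUntil_subset w hvw hx
  have hP2sup : ∀ x ∈ P2.support, x ∈ S := by
    intro x hx
    rw [hSw, Set.mem_setOf_eq]
    exact Walk.support_dropUntil_subset w hvw hx
  by_cases hpar : Even (na + nc)
  · -- use D = P1.append q.reverse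
    set D : G.Walk u₀ u₀ := P1.append q.reverse with hDdef
    have hDedges : D.edges = P1.edges ++ q.reverse.edges := by
      rw [hDdef, Walk.edges_append]
    have hDtrail : D.IsTrail := by
      rw [Walk.isTrail_def, hDedges, List.nodup_append]
      refine ⟨hP1path.isTrail.edges_nodup, hqpath.reverse.isTrail.edges_nodup, ?_⟩
      intro e he1 e' he2 hee
      subst hee
      rw [Walk.edges_reverse, List.mem_reverse] at he2
      exact Set.disjoint_left.mp hp1q1 he1 he2
    have hP1nnil : ¬ P1.Nil := Walk.not_nil_of_ne (Ne.symm hvne)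
    have hDnnil : ¬ D.Nil := by
      rw [Walk.not_nil_iff_lt_length, hDdef, Walk.length_append]
      have := Walk.not_nil_iff_lt_length.mp hP1nnil
      omega
    have hDcyc : D.IsCycle := by
      rw [Walk.isCycle_def]
      refine ⟨hDtrail, fun h => hDnnil (Walk.nil_iff_eq_nil.mpr h), ?_⟩
      rw [hDdef, Walk.tail_support_append, List.nodup_append]
      refine ⟨((Walk.isPath_def _).mp hP1path).tail,
        ((Walk.isPath_def _).mp hqpath.reverse).tail, ?_⟩
      intro x hx1 y hx2 hxy
      subst hxy
      have hxP1 : x ∈ P1.support := List.mem_of_mem_tail hx1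
      have hxS : x ∈ S := hP1sup x hxP1
      have hxne_u₀ : x ≠ u₀ := by
        intro rfl_eq
        have hnodup := (Walk.isPath_def _).mp hP1path
        rw [Walk.support_eq_cons] at hnodup
        exact (List.nodup_cons.mp hnodup).1 (rfl_eq ▸ hx1)
      have hxq : x ∈ q.support := by
        have : x ∈ q.reverse.support := List.mem_of_mem_tail hx2
        rwa [Walk.support_reverse, List.mem_reverse] at this
      have hxne_v : x ≠ v := by
        intro rfl_eq
        have hnodup := (Walk.isPath_def _).mp hqpath.reverse
        rw [Walk.support_eq_cons] at hnodup
        exact (List.nodup_cons.mp hnodup).1 (rfl_eq ▸ hx2)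
      rcases hint x hxq hxS with h' | h'
      · exact hxne_u₀ h'
      · exact hxne_v h'
    have hDset : {e | e ∈ D.edges} = {e | e ∈ P1.edges} ∪ {e | e ∈ q.edges} := by
      ext e
      simp only [Set.mem_setOf_eq, Set.mem_union, hDedges, List.mem_append,
        Walk.edges_reverse, List.mem_reverse]
    have hDsub : {e | e ∈ D.edges} ⊆ C ∪ C' := by
      rw [hDset]
      exact Set.union_subset_union hp1C hq1C'
    have hDeven : Even {e ∈ {e | e ∈ D.edges} | σ e = true}.ncard := by
      rw [hDset, aux_filter_union_ncard hp1q1]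
      exact hpar
    exact aux_assemble G σ hCG hC'G hdisj hCinc hC'inc D hDcyc hDsub hDeven
  · -- use D = q.append P2
    have hpar' : Even (nc + nb) := by
      have h1 : (na + nb) % 2 = 1 := Nat.odd_iff.mp hOdd
      have h2 : (na + nc) % 2 = 1 := Nat.not_even_iff.mp hpar
      rw [Nat.even_iff]
      omega
    set D : G.Walk u₀ u₀ := q.append P2 with hDdef
    have hDedges : D.edges = q.edges ++ P2.edges := by
      rw [hDdef, Walk.edges_append]
    have hDtrail : D.IsTrail := by
      rw [Walk.isTrail_def, hDedges, List.nodup_append]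
      refine ⟨hqpath.isTrail.edges_nodup, hP2path.isTrail.edges_nodup, ?_⟩
      intro e he1 e' he2 hee
      subst hee
      exact Set.disjoint_left.mp hp2q1 he2 he1
    have hDnnil : ¬ D.Nil := by
      rw [Walk.not_nil_iff_lt_length, hDdef, Walk.length_append]
      have := Walk.not_nil_iff_lt_length.mp hqnil
      omega
    have hDcyc : D.IsCycle := by
      rw [Walk.isCycle_def]
      refine ⟨hDtrail, fun h => hDnnil (Walk.nil_iff_eq_nil.mpr h), ?_⟩
      rw [hDdef, Walk.tail_support_append, List.nodup_append]
      refine ⟨((Walk.isPath_def _).mp hqpath).tail,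
        ((Walk.isPath_def _).mp hP2path).tail, ?_⟩
      intro x hx1 y hx2 hxy
      subst hxy
      have hxq : x ∈ q.support := List.mem_of_mem_tail hx1
      have hxne_u₀ : x ≠ u₀ := by
        intro rfl_eq
        have hnodup := (Walk.isPath_def _).mp hqpath
        rw [Walk.support_eq_cons] at hnodup
        exact (List.nodup_cons.mp hnodup).1 (rfl_eq ▸ hx1)
      have hxP2 : x ∈ P2.support := List.mem_of_mem_tail hx2
      have hxS : x ∈ S := hP2sup x hxP2
      have hxne_v : x ≠ v := by
        intro rfl_eq
        have hnodup := (Walk.isPath_def _).mp hP2path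
        rw [Walk.support_eq_cons] at hnodup
        exact (List.nodup_cons.mp hnodup).1 (rfl_eq ▸ hx2)
      rcases hint x hxq hxS with h' | h'
      · exact hxne_u₀ h'
      · exact hxne_v h'
    have hDset : {e | e ∈ D.edges} = {e | e ∈ q.edges} ∪ {e | e ∈ P2.edges} := by
      ext e
      simp only [Set.mem_setOf_eq, Set.mem_union, hDedges, List.mem_append]
    have hDsub : {e | e ∈ D.edges} ⊆ C ∪ C' := by
      rw [hDset]
      intro e he
      rcases he with he | he
      · exact Or.inr (hq1C' he)
      · exact Or.inl (hp2C he)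
    have hDeven : Even {e ∈ {e | e ∈ D.edges} | σ e = true}.ncard := by
      rw [hDset, aux_filter_union_ncard hp2q1.symm]
      exact hpar'
    exact aux_assemble G σ hCG hC'G hdisj hCinc hC'inc D hDcyc hDsub hDeven
end
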